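/- arXiv:0706.3441 — 3 statements merged into one kernel-verified Lean document; each statement's English description precedes it below -/
import Mathlib

section
/- Let K/k be an extension of H-graded fields, G a finite group of graded automorphisms of K fixing k pointwise, L = K^G, and ψ: P_{K/k} → P_{L/k} the map O ↦ O ∩ L between Zariski–Riemann spaces of graded valuation rings. If x ∈ P_{L/k} with fiber S = ψ^{-1}(x), and x̄ denotes the set of generalizations of x (points whose valuation ring contains that of x), then ψ^{-1}(x̄) equals the set of all generalizations of points of S. -/
open scoped DirectSum

/-- An `H`-graded field: a nonzero commutative ring with an internal grading by the
commutative group `H` in which every nonzero homogeneous element is invertible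
(with homogeneous inverse). -/
structure GradedField (H : Type*) [CommGroup H] [DecidableEq H] (K : Type*) [CommRing K] where
  comp : H → AddSubgroup K
  one_mem : (1 : K) ∈ comp 1
  mul_mem : ∀ {g h : H} {x y : K}, x ∈ comp g → y ∈ comp h → x * y ∈ comp (g * h)
  isInternal : DirectSum.IsInternal fun h : H => comp h
  zero_ne_one : (0 : K) ≠ 1
  inv_mem : ∀ {h : H} {x : K}, x ∈ comp h → x ≠ 0 → ∃ y ∈ comp h⁻¹, x * y = 1

namespace GradedField

variable {H : Type*} [CommGroup H] [DecidableEq H] {K : Type*} [CommRing K] (F : GradedField H K)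

/-- A homogeneous element. -/
def Homogeneous (x : K) : Prop := ∃ h, x ∈ F.comp h

/-- A subring is graded if each of its elements is a sum of homogeneous elements of the
subring. -/
def IsGradedSubring (R : Subring K) : Prop :=
  ∀ x ∈ R, x ∈ AddSubgroup.closure {y : K | y ∈ R ∧ F.Homogeneous y}

/-- A graded subfield: a graded subring closed under inverses of nonzero homogeneous
elements. -/
structure IsGradedSubfield (L : Subring K) : Prop where
  graded : F.IsGradedSubring L
  inv_mem : ∀ x ∈ L, F.Homogeneous x → x ≠ 0 → Ring.inverse x ∈ L

/-- A graded valuation ring of the graded subfield `L`: a graded subring `R ⊆ L` such that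
every nonzero homogeneous element of `L` lies in `R` or has its inverse in `R`. -/
def IsGradedValRing (L R : Subring K) : Prop :=
  R ≤ L ∧ F.IsGradedSubring R ∧
    ∀ x ∈ L, F.Homogeneous x → x ≠ 0 → (x ∈ R ∨ Ring.inverse x ∈ R)

/-- The identity component `K₁`, as a subring. -/
def oneComponent : Subring K where
  carrier := F.comp 1
  one_mem' := F.one_mem
  mul_mem' := fun ha hb => by simpa using F.mul_mem ha hb
  add_mem' := fun ha hb => (F.comp 1).add_mem ha hb
  zero_mem' := (F.comp 1).zero_mem
  neg_mem' := fun ha => (F.comp 1).neg_mem ha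

theorem mem_oneComponent {x : K} : x ∈ F.oneComponent ↔ x ∈ F.comp 1 := Iff.rfl

/-- The value group `ρ(L^×) ⊆ H` of a graded subfield `L`. -/
def valueGroup (L : Subring K)
    (hL : ∀ x ∈ L, F.Homogeneous x → x ≠ 0 → Ring.inverse x ∈ L) : Subgroup H where
  carrier := {h | ∃ x ∈ F.comp h, x ≠ 0 ∧ x ∈ L}
  one_mem' := ⟨1, F.one_mem, Ne.symm F.zero_ne_one, L.one_mem⟩
  mul_mem' := by
    rintro g h ⟨x, hx, hx0, hxL⟩ ⟨y, hy, hy0, hyL⟩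
    obtain ⟨x', hx', hxx'⟩ := F.inv_mem hx hx0
    obtain ⟨y', hy', hyy'⟩ := F.inv_mem hy hy0
    refine ⟨x * y, F.mul_mem hx hy, ?_, L.mul_mem hxL hyL⟩
    intro h0
    have h1 : x * y * (x' * y') = 1 := by rw [mul_mul_mul_comm, hxx', hyy', one_mul]
    rw [h0, zero_mul] at h1
    exact F.zero_ne_one h1
  inv_mem' := by
    rintro g ⟨x, hx, hx0, hxL⟩
    obtain ⟨y, hy, hxy⟩ := F.inv_mem hx hx0
    have hu : IsUnit x := IsUnit.of_mul_eq_one y hxy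
    have hyx : Ring.inverse x = y := by
      calc Ring.inverse x = Ring.inverse x * (x * y) := by rw [hxy, mul_one]
        _ = Ring.inverse x * x * y := by ring
        _ = y := by rw [Ring.inverse_mul_cancel x hu, one_mul]
    refine ⟨y, hy, ?_, ?_⟩
    · intro h0; rw [h0, mul_zero] at hxy; exact F.zero_ne_one hxy
    · rw [← hyx]; exact hL x hxL ⟨g, hx⟩ hx0

/-- The value group `ρ(K^×)` of the whole graded field. -/
def fullValueGroup : Subgroup H :=
  F.valueGroup ⊤ (fun _ _ _ _ => Subring.mem_top _)

/-- `K₁` as a module over `L₁ = K₁ ∩ L`. -/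
def oneSubmodule (L : Subring K) : Submodule ↥(F.oneComponent ⊓ L) K where
  carrier := F.comp 1
  add_mem' := fun ha hb => (F.comp 1).add_mem ha hb
  zero_mem' := (F.comp 1).zero_mem
  smul_mem' := fun c x hx => by
    have hc : (c : K) ∈ F.comp 1 := ((Subring.mem_inf).mp c.2).1
    have := F.mul_mem hc hx
    simpa [Subring.smul_def] using this

/-- A graded automorphism: a ring automorphism preserving each graded component. -/
def IsGradedAut (σ : RingAut K) : Prop := ∀ (h : H) (x : K), x ∈ F.comp h → σ x ∈ F.comp h

end GradedField

/-- The fixed subring `K^G` of a group of ring automorphisms. -/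
def fixedSubring {K : Type*} [CommRing K] (G : Subgroup (RingAut K)) : Subring K where
  carrier := {x | ∀ σ ∈ G, σ x = x}
  one_mem' := fun σ _ => map_one σ
  mul_mem' := fun ha hb σ hσ => by rw [map_mul, ha σ hσ, hb σ hσ]
  add_mem' := fun ha hb σ hσ => by rw [map_add, ha σ hσ, hb σ hσ]
  zero_mem' := fun σ _ => map_zero σ
  neg_mem' := fun ha σ hσ => by rw [map_neg, ha σ hσ]

theorem mem_fixedSubring {K : Type*} [CommRing K] {G : Subgroup (RingAut K)} {x : K} :
    x ∈ fixedSubring G ↔ ∀ σ ∈ G, σ x = x := Iff.rfl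


namespace GradedField

variable {H : Type*} [CommGroup H] [DecidableEq H] {K : Type*} [CommRing K]
variable (F : GradedField H K)

/-- Decomposition of an element into its homogeneous components. -/
noncomputable def decompose (x : K) : ⨁ h : H, ↥(F.comp h) :=
  (Equiv.ofBijective _ F.isInternal).symm x

/-- The degree-`h` homogeneous component of `x`. -/
noncomputable def component (h : H) (x : K) : K := (F.decompose x h : K)

/-- The inertia subgroup of `G`: graded automorphisms in `G` acting trivially on `K₁`. -/
def inertia (G : Subgroup (RingAut K)) : Subgroup (RingAut K) where
  carrier := {σ | σ ∈ G ∧ ∀ x ∈ F.comp 1, σ x = x}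
  one_mem' := ⟨G.one_mem, fun _ _ => rfl⟩
  mul_mem' := fun {a b} ha hb => ⟨G.mul_mem ha.1 hb.1, fun x hx => by
    show a (b x) = x
    rw [hb.2 x hx, ha.2 x hx]⟩
  inv_mem' := fun {a} ha => ⟨G.inv_mem ha.1, fun x hx => by
    conv_lhs => rw [← ha.2 x hx]
    exact a.symm_apply_apply x⟩

theorem mem_inertia {G : Subgroup (RingAut K)} {σ : RingAut K} :
    σ ∈ F.inertia G ↔ σ ∈ G ∧ ∀ x ∈ F.comp 1, σ x = x := Iff.rfl

end GradedField

/-- A subring `S` containing a subring `L`, viewed as an `L`-submodule of the ambient ring. -/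
def Subring.toSubmoduleOver {K : Type*} [CommRing K] (L S : Subring K) (hLS : L ≤ S) :
    Submodule ↥L K where
  carrier := S
  add_mem' := fun ha hb => S.add_mem ha hb
  zero_mem' := S.zero_mem
  smul_mem' := fun c x hx => S.mul_mem (hLS c.2) hx

section ZR

variable {H : Type*} [CommGroup H] [DecidableEq H] {K : Type*} [CommRing K]

/-- The Zariski–Riemann space of graded valuation rings of `K` containing `k₀`. -/
def GradedField.ZR (F : GradedField H K) (k₀ : Subring K) : Type _ :=
  {O : Subring K // F.IsGradedValRing ⊤ O ∧ k₀ ≤ O}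

/-- The set of homogeneous units (nonzero homogeneous elements) of `K`. -/
def GradedField.HomogUnits (F : GradedField H K) : Type _ :=
  {x : K // x ≠ 0 ∧ F.Homogeneous x}

open Classical in
/-- The embedding of the Zariski–Riemann space into `{0,1}^{K^×}` via characteristic
functions. -/
noncomputable def GradedField.chi (F : GradedField H K) (k₀ : Subring K) (O : F.ZR k₀) :
    F.HomogUnits → Bool :=
  fun x => decide (x.1 ∈ O.1)

/-- Basic open sets `P{F}∖{G}` of the constructible topology, for finite sets `F`, `G` of
homogeneous units. -/
def GradedField.constructibleBasis (F : GradedField H K) (k₀ : Subring K) :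
    Set (Set (F.ZR k₀)) :=
  {s | ∃ Fs Gs : Finset K, (∀ a ∈ Fs, a ≠ 0 ∧ F.Homogeneous a) ∧
    (∀ b ∈ Gs, b ≠ 0 ∧ F.Homogeneous b) ∧
    s = {O : F.ZR k₀ | (∀ a ∈ Fs, a ∈ O.1) ∧ ∀ b ∈ Gs, b ∉ O.1}}

/-- The constructible topology on the Zariski–Riemann space. -/
def GradedField.constructibleTop (F : GradedField H K) (k₀ : Subring K) :
    TopologicalSpace (F.ZR k₀) :=
  TopologicalSpace.generateFrom (F.constructibleBasis k₀)


namespace GradedField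

variable {H : Type*} [CommGroup H] [DecidableEq H] {K : Type*} [CommRing K]
variable (F : GradedField H K)

open scoped Classical

theorem coe_decompose (w : K) :
    DirectSum.coeAddMonoidHom (fun h : H => F.comp h) (F.decompose w) = w :=
  (Equiv.ofBijective _ F.isInternal).apply_symm_apply w

theorem decompose_eq_iff {w : K} {D : ⨁ h : H, ↥(F.comp h)} :
    F.decompose w = D ↔ w = DirectSum.coeAddMonoidHom (fun h : H => F.comp h) D :=
  (Equiv.ofBijective _ F.isInternal).symm_apply_eq

theorem component_mem (g : H) (w : K) : F.component g w ∈ F.comp g :=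
  (F.decompose w g).2

theorem decompose_add (u v : K) : F.decompose (u + v) = F.decompose u + F.decompose v := by
  rw [decompose_eq_iff, map_add, coe_decompose, coe_decompose]

theorem component_add (g : H) (u v : K) :
    F.component g (u + v) = F.component g u + F.component g v := by
  unfold GradedField.component
  rw [decompose_add]
  rfl

theorem component_zero (g : H) : F.component g 0 = 0 := by
  have : F.decompose 0 = 0 := by rw [decompose_eq_iff, map_zero]
  unfold GradedField.component
  rw [this]
  rfl

/-- `component g` as an additive homomorphism. -/
noncomputable def componentHom (g : H) : K →+ K :=
  AddMonoidHom.mk' (F.component g) (F.component_add g)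

theorem uniq (s : Finset H) (c : H → K) (hc : ∀ h, c h ∈ F.comp h)
    (hs : ∀ h ∉ s, c h = 0) (g : H) :
    F.component g (∑ h ∈ s, c h) = c g := by
  classical
  have hD : F.decompose (∑ h ∈ s, c h)
      = ∑ h ∈ s, DirectSum.of (fun h : H => ↥(F.comp h)) h ⟨c h, hc h⟩ := by
    rw [decompose_eq_iff, map_sum]
    simp [DirectSum.coeAddMonoidHom_of]
  unfold GradedField.component
  rw [hD]
  have : ((∑ h ∈ s, DirectSum.of (fun h : H => ↥(F.comp h)) h ⟨c h, hc h⟩) g : K)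
      = ∑ h ∈ s, ((DirectSum.of (fun h : H => ↥(F.comp h)) h ⟨c h, hc h⟩ g : K)) := by
    rw [DFinsupp.finset_sum_apply]
    exact AddSubmonoidClass.coe_finset_sum _ _
  rw [this]
  by_cases hg : g ∈ s
  · rw [Finset.sum_eq_single_of_mem g hg]
    · rw [DirectSum.of_eq_same]
    · intro h _ hne
      rw [DirectSum.of_eq_of_ne _ _ _ hne.symm]
      rfl
  · rw [hs g hg, Finset.sum_eq_zero]
    intro h hh
    rw [DirectSum.of_eq_of_ne _ _ _ (by rintro rfl; exact hg hh)]
    rfl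

theorem sum_support_component (w : K) :
    ∑ h ∈ (F.decompose w).support, F.component h w = w := by
  classical
  have h1 := DirectSum.sum_support_of (F.decompose w)
  have h2 := congrArg (DirectSum.coeAddMonoidHom fun h : H => F.comp h) h1
  rw [map_sum, F.coe_decompose w] at h2
  conv_rhs => rw [← h2]
  apply Finset.sum_congr rfl
  intro h _
  rw [DirectSum.coeAddMonoidHom_of]
  rfl

theorem component_eq_zero_of_not_mem_support {w : K} {h : H}
    (hh : h ∉ (F.decompose w).support) : F.component h w = 0 := by
  classical
  have := DFinsupp.notMem_support_iff.mp hh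
  unfold GradedField.component
  rw [this]
  rfl

theorem component_of_mem {h : H} {w : K} (hw : w ∈ F.comp h) (g : H) :
    F.component g w = if g = h then w else 0 := by
  classical
  have hc : ∀ h', (fun h' => if h' = h then w else 0) h' ∈ F.comp h' := by
    intro h'
    by_cases hh : h' = h
    · simp only [if_pos hh, hh]; exact hw
    · simp only [if_neg hh]; exact (F.comp h').zero_mem
  have h2 := F.uniq {h} (fun h' => if h' = h then w else 0)
    hc (fun h' hh' => if_neg (by simpa using hh')) g
  simpa using h2

theorem component_mul_left {h : H} {r : K} (hr : r ∈ F.comp h) (w : K) (g : H) :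
    F.component g (r * w) = r * F.component (h⁻¹ * g) w := by
  classical
  set s := (F.decompose w).support with hsdef
  have hw : r * w = ∑ g' ∈ s.image (fun h' => h * h'), r * F.component (h⁻¹ * g') w := by
    rw [Finset.sum_image (by intro a _ b _ hab; exact mul_left_cancel hab)]
    have : ∀ h' ∈ s, r * F.component (h⁻¹ * (h * h')) w = r * F.component h' w := by
      intro h' _; rw [inv_mul_cancel_left]
    rw [Finset.sum_congr rfl this, ← Finset.mul_sum, F.sum_support_component]
  rw [hw, F.uniq _ _ ?_ ?_ g]
  · intro g'
    have := F.mul_mem hr (F.component_mem (h⁻¹ * g') w)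
    rwa [mul_inv_cancel_left] at this
  · intro g' hg'
    have : h⁻¹ * g' ∉ s := by
      intro hmem
      exact hg' (Finset.mem_image.mpr ⟨h⁻¹ * g', hmem, by group⟩)
    rw [F.component_eq_zero_of_not_mem_support this, mul_zero]

theorem pow_mem_comp {h : H} {z : K} (hz : z ∈ F.comp h) (n : ℕ) : z ^ n ∈ F.comp (h ^ n) := by
  induction n with
  | zero => simpa using F.one_mem
  | succ n ih => rw [pow_succ, pow_succ]; exact F.mul_mem ih hz

end GradedField
namespace GradedField

variable {H : Type*} [CommGroup H] [DecidableEq H] {K : Type*} [CommRing K]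
variable (F : GradedField H K)

theorem inv_unique {a b t : K} (hab : a * b = 1) (hat : a * t = 1) : t = b := by
  calc t = t * (a * b) := by rw [hab, mul_one]
    _ = b * (a * t) := by ring
    _ = b := by rw [hat, mul_one]

theorem ringInverse_eq {a b : K} (hab : a * b = 1) : Ring.inverse a = b := by
  have hu : IsUnit a := IsUnit.of_mul_eq_one b hab
  calc Ring.inverse a = Ring.inverse a * (a * b) := by rw [hab, mul_one]
    _ = Ring.inverse a * a * b := by ring
    _ = b := by rw [Ring.inverse_mul_cancel a hu, one_mul]

/-- Membership in an additive subgroup follows from membership of all components. -/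
theorem mem_of_forall_component {S : AddSubgroup K} {w : K}
    (h : ∀ g, F.component g w ∈ S) : w ∈ S := by
  classical
  rw [← F.sum_support_component w]
  exact sum_mem fun g _ => h g

theorem mem_subring_of_forall_component {S : Subring K} {w : K}
    (h : ∀ g, F.component g w ∈ S) : w ∈ S :=
  F.mem_of_forall_component (S := S.toAddSubgroup) h

/-- A graded subring is closed under taking components. -/
theorem component_neg (g : H) (u : K) : F.component g (-u) = -F.component g u := by
  have h0 := F.component_add g u (-u)
  rw [add_neg_cancel, F.component_zero] at h0
  linear_combination -h0

theorem component_mem_of_gradedSubring {R : Subring K} (hR : F.IsGradedSubring R)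
    {w : K} (hw : w ∈ R) (g : H) : F.component g w ∈ R := by
  have hmem := hR w hw
  clear hw
  induction hmem using AddSubgroup.closure_induction with
  | mem y hy =>
    obtain ⟨hyR, h', hy'⟩ := hy
    rw [F.component_of_mem hy' g]
    split
    · exact hyR
    · exact R.zero_mem
  | zero => rw [F.component_zero]; exact R.zero_mem
  | add u v _ _ hu hv => rw [F.component_add]; exact R.add_mem hu hv
  | neg u _ hu => rw [F.component_neg]; exact R.neg_mem hu

/-- Closure under components implies gradedness. -/
theorem isGradedSubring_of_components {R : Subring K}
    (h : ∀ w ∈ R, ∀ g, F.component g w ∈ R) : F.IsGradedSubring R := by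
  classical
  intro w hw
  rw [← F.sum_support_component w]
  refine sum_mem fun g _ => AddSubgroup.subset_closure ?_
  exact ⟨h w hw g, g, F.component_mem g w⟩

/-- Components of a product stay in a subring closed under components of the factors. -/
theorem component_mul_mem {S : Subring K} {u v : K}
    (hu : ∀ g, F.component g u ∈ S) (hv : ∀ g, F.component g v ∈ S) (g : H) :
    F.component g (u * v) ∈ S := by
  classical
  have huv : u * v = ∑ h ∈ (F.decompose u).support, F.component h u * v := by
    rw [← Finset.sum_mul, F.sum_support_component]
  rw [huv]
  have : F.component g (∑ h ∈ (F.decompose u).support, F.component h u * v)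
      = ∑ h ∈ (F.decompose u).support, F.component g (F.component h u * v) :=
    map_sum (F.componentHom g) _ _
  rw [this]
  refine sum_mem fun h _ => ?_
  rw [F.component_mul_left (F.component_mem h u) v g]
  exact S.mul_mem (hu h) (hv (h⁻¹ * g))

end GradedField
namespace GradedField

section Chev

variable {K : Type*} [CommRing K] {R : Subring K} {I : AddSubgroup K}

/-- The subgroup of elements expressible as `∑_{i<n} e i * a^i` with coefficients in `I`. -/
private def polySub (I : AddSubgroup K) (a : K) (n : ℕ) : AddSubgroup K where
  carrier := {w | ∃ e : ℕ → K, (∀ i, e i ∈ I) ∧ w = ∑ i ∈ Finset.range n, e i * a ^ i}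
  zero_mem' := ⟨fun _ => 0, fun _ => I.zero_mem, by simp⟩
  add_mem' := by
    rintro w w' ⟨e, he, rfl⟩ ⟨e', he', rfl⟩
    exact ⟨fun i => e i + e' i, fun i => I.add_mem (he i) (he' i), by
      rw [← Finset.sum_add_distrib]; exact Finset.sum_congr rfl fun i _ => (add_mul _ _ _).symm⟩
  neg_mem' := by
    rintro w ⟨e, he, rfl⟩
    exact ⟨fun i => -e i, fun i => I.neg_mem (he i), by
      rw [← Finset.sum_neg_distrib]; exact Finset.sum_congr rfl fun i _ => (neg_mul _ _).symm⟩

private theorem polySub_single (hw : ∀ w ∈ I, w ∈ R) {a : K} {n k : ℕ} (hk : k < n)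
    {w : K} (hwI : w ∈ I) : w * a ^ k ∈ polySub I a n := by
  refine ⟨fun i => if i = k then w else 0, fun i => ?_, ?_⟩
  · simp only []
    split
    · exact hwI
    · exact I.zero_mem
  · rw [Finset.sum_eq_single_of_mem k (Finset.mem_range.mpr hk)]
    · simp
    · intro i _ hi
      simp [if_neg hi]

private theorem polySub_mul (hmul : ∀ r ∈ R, ∀ w ∈ I, r * w ∈ I) {a : K} {n : ℕ}
    {r w : K} (hr : r ∈ R) (hwT : w ∈ polySub I a n) : r * w ∈ polySub I a n := by
  obtain ⟨e, he, rfl⟩ := hwT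
  refine ⟨fun i => r * e i, fun i => hmul r hr _ (he i), ?_⟩
  rw [Finset.mul_sum]
  exact Finset.sum_congr rfl fun i _ => (mul_assoc _ _ _).symm

private theorem chev_step (hIR : ∀ w ∈ I, w ∈ R) (hmul : ∀ r ∈ R, ∀ w ∈ I, r * w ∈ I)
    {a b : K} (hab : a * b = 1) {n m : ℕ} (hmn : m ≤ n + 1)
    {c d : ℕ → K} (hc : ∀ i, c i ∈ I) (hd : ∀ j, d j ∈ I)
    (E1 : (1 : K) = ∑ i ∈ Finset.range (n + 2), c i * a ^ i)
    (E2 : (1 : K) = ∑ j ∈ Finset.range (m + 1), d j * b ^ j) :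
    ∃ e : ℕ → K, (∀ i, e i ∈ I) ∧ (1 : K) = ∑ i ∈ Finset.range (n + 1), e i * a ^ i := by
  rw [Finset.sum_range_succ] at E1
  rw [Finset.sum_range_succ'] at E2
  rw [pow_zero, mul_one] at E2
  set S := ∑ i ∈ Finset.range (n + 1), c i * a ^ i with hS
  set T2 := ∑ j ∈ Finset.range m, d (j + 1) * b ^ (j + 1) with hT2
  have hpow : ∀ j < m, a ^ (n + 1) * b ^ (j + 1) = a ^ (n - j) := by
    intro j hj
    have hjn : j + 1 ≤ n + 1 := le_trans hj hmn
    have : n + 1 = (n - j) + (j + 1) := by omega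
    rw [this, pow_add, mul_assoc, ← mul_pow, hab, one_pow, mul_one]
  have key : (1 : K) = d 0 + (1 - d 0) * S
      + c (n + 1) * a ^ (n + 1) * T2 := by
    linear_combination (1 - d 0) * E1 + (c (n + 1) * a ^ (n + 1)) * E2
  have h3 : c (n + 1) * a ^ (n + 1) * T2
      = ∑ j ∈ Finset.range m, (c (n + 1) * d (j + 1)) * a ^ (n - j) := by
    rw [hT2, Finset.mul_sum]
    refine Finset.sum_congr rfl fun j hj => ?_
    rw [← hpow j (Finset.mem_range.mp hj)]
    ring
  have mem1 : (1 : K) ∈ polySub I a (n + 1) := by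
    rw [key, h3]
    refine AddSubgroup.add_mem _ (AddSubgroup.add_mem _ ?_ ?_) ?_
    · have : d 0 = d 0 * a ^ 0 := by rw [pow_zero, mul_one]
      rw [this]
      exact polySub_single hIR (Nat.succ_pos n) (hd 0)
    · refine polySub_mul hmul (R.sub_mem R.one_mem (hIR _ (hd 0))) ⟨c, hc, rfl⟩
    · refine sum_mem fun j hj => ?_
      refine polySub_single hIR ?_ (hmul _ (hIR _ (hc (n + 1))) _ (hd (j + 1)))
      omega
  obtain ⟨e, he, hee⟩ := mem1
  exact ⟨e, he, hee⟩

private theorem chev_main (h01 : (0 : K) ≠ 1) (hIR : ∀ w ∈ I, w ∈ R)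
    (hmul : ∀ r ∈ R, ∀ w ∈ I, r * w ∈ I) (h1 : (1 : K) ∉ I) :
    ∀ (k : ℕ) (a b : K), a * b = 1 → ∀ N M : ℕ, N + M ≤ k →
      (∃ c : ℕ → K, (∀ i, c i ∈ I) ∧ (1 : K) = ∑ i ∈ Finset.range N, c i * a ^ i) →
      (∃ d : ℕ → K, (∀ j, d j ∈ I) ∧ (1 : K) = ∑ j ∈ Finset.range M, d j * b ^ j) →
      False := by
  intro k
  induction k with
  | zero =>
    rintro a b hab N M hNM ⟨c, hc, hca⟩ _
    have : N = 0 := by omega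
    subst this
    simp at hca
    exact h01 hca.symm
  | succ k ih =>
    rintro a b hab N M hNM ⟨c, hc, hca⟩ ⟨d, hd, hdb⟩
    match N, M with
    | 0, _ => simp at hca; exact h01 hca.symm
    | _, 0 => simp at hdb; exact h01 hdb.symm
    | 1, _ =>
      simp only [Finset.sum_range_one, pow_zero, mul_one] at hca
      exact h1 (hca ▸ hc 0)
    | _, 1 =>
      simp only [Finset.sum_range_one, pow_zero, mul_one] at hdb
      exact h1 (hdb ▸ hd 0)
    | n + 2, m' + 2 =>
      by_cases hle : m' + 2 ≤ n + 2
      · obtain ⟨e, he, hee⟩ := chev_step hIR hmul hab (by omega : m' + 1 ≤ n + 1)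
          hc hd hca hdb
        exact ih a b hab (n + 1) (m' + 2) (by omega) ⟨e, he, hee⟩ ⟨d, hd, hdb⟩
      · obtain ⟨e, he, hee⟩ := chev_step hIR hmul
          (by rw [mul_comm]; exact hab) (by omega : n + 1 ≤ m' + 1)
          hd hc hdb hca
        exact ih b a (by rw [mul_comm]; exact hab) (m' + 1) (n + 2) (by omega)
          ⟨e, he, hee⟩ ⟨c, hc, hca⟩

theorem chev (h01 : (0 : K) ≠ 1) (hIR : ∀ w ∈ I, w ∈ R)
    (hmul : ∀ r ∈ R, ∀ w ∈ I, r * w ∈ I) (h1 : (1 : K) ∉ I)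
    {a b : K} (hab : a * b = 1)
    (hpa : ∃ (N : ℕ) (c : ℕ → K), (∀ i, c i ∈ I) ∧
      (1 : K) = ∑ i ∈ Finset.range N, c i * a ^ i)
    (hpb : ∃ (M : ℕ) (d : ℕ → K), (∀ j, d j ∈ I) ∧
      (1 : K) = ∑ j ∈ Finset.range M, d j * b ^ j) : False := by
  obtain ⟨N, c, hc, hca⟩ := hpa
  obtain ⟨M, d, hd, hdb⟩ := hpb
  exact chev_main h01 hIR hmul h1 (N + M) a b hab N M le_rfl ⟨c, hc, hca⟩ ⟨d, hd, hdb⟩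

end Chev

end GradedField
namespace GradedField

variable {H : Type*} [CommGroup H] [DecidableEq H] {K : Type*} [CommRing K]
variable (F : GradedField H K)

/-- In a graded valuation ring, the sum of two degree-one non-units is a non-unit. -/
theorem deg1_nonunit_add {L x' : Subring K}
    (hval : ∀ w ∈ L, F.Homogeneous w → w ≠ 0 → w ∈ x' ∨ Ring.inverse w ∈ x')
    (hx'L : x' ≤ L) (hLinv : ∀ w ∈ L, ∀ t : K, w * t = 1 → t ∈ L)
    {p q : K} (hp1 : p ∈ F.comp 1) (hpx : p ∈ x') (hpn : ∀ t ∈ x', p * t ≠ 1)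
    (hq1 : q ∈ F.comp 1) (hqx : q ∈ x') (hqn : ∀ t ∈ x', q * t ≠ 1) :
    ∀ t ∈ x', (p + q) * t ≠ 1 := by
  by_cases hp0 : p = 0
  · intro t ht heq
    rw [hp0, zero_add] at heq
    exact hqn t ht heq
  by_cases hq0 : q = 0
  · intro t ht heq
    rw [hq0, add_zero] at heq
    exact hpn t ht heq
  obtain ⟨q', hq'1, hqq'⟩ := F.inv_mem hq1 hq0
  rw [inv_one] at hq'1
  obtain ⟨p', hp'1, hpp'⟩ := F.inv_mem hp1 hp0
  rw [inv_one] at hp'1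
  have hq'L : q' ∈ L := hLinv q (hx'L hqx) q' hqq'
  have hp'L : p' ∈ L := hLinv p (hx'L hpx) p' hpp'
  set u := p * q' with hu
  have hu1 : u ∈ F.comp 1 := by
    have := F.mul_mem hp1 hq'1
    rwa [one_mul] at this
  have huL : u ∈ L := L.mul_mem (hx'L hpx) hq'L
  have hu0 : u ≠ 0 := by
    intro h0
    apply hp0
    calc p = p * (q * q') := by rw [hqq', mul_one]
      _ = u * q := by rw [hu]; ring
      _ = 0 := by rw [h0, zero_mul]
  have hqu : q * u = p := by
    calc q * (p * q') = p * (q * q') := by ring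
      _ = p := by rw [hqq', mul_one]
  rcases hval u huL ⟨1, hu1⟩ hu0 with hux | hux
  · intro t ht heq
    refine hqn ((u + 1) * t) (x'.mul_mem (x'.add_mem hux x'.one_mem) ht) ?_
    linear_combination heq + t * hqu
  · -- the inverse of u is q * p'
    have huu' : u * (q * p') = 1 := by
      calc p * q' * (q * p') = (p * p') * (q * q') := by ring
        _ = 1 := by rw [hpp', hqq', mul_one]
    rw [ringInverse_eq huu'] at hux
    have hpu' : p * (q * p') = q := by
      calc p * (q * p') = q * (p * p') := by ring
        _ = q := by rw [hpp', mul_one]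
    intro t ht heq
    refine hpn ((1 + q * p') * t) (x'.mul_mem (x'.add_mem x'.one_mem hux) ht) ?_
    linear_combination heq + t * hpu'

end GradedField

/-- Polynomials with all coefficients in a subring `R`. -/
def coeffSubring {K : Type*} [CommRing K] (R : Subring K) : Subring (Polynomial K) where
  carrier := {p | ∀ i, p.coeff i ∈ R}
  zero_mem' := fun i => by simp only [Polynomial.coeff_zero]; exact R.zero_mem
  one_mem' := fun i => by
    rw [Polynomial.coeff_one]
    split
    · exact R.one_mem
    · exact R.zero_mem
  add_mem' := fun hp hq i => by
    rw [Polynomial.coeff_add]; exact R.add_mem (hp i) (hq i)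
  neg_mem' := fun hp i => by
    rw [Polynomial.coeff_neg]; exact R.neg_mem (hp i)
  mul_mem' := fun {p q} hp hq i => by
    rw [Polynomial.coeff_mul]
    exact sum_mem fun c _ => R.mul_mem (hp c.1) (hq c.2)
namespace GradedField

variable {H : Type*} [CommGroup H] [DecidableEq H] {K : Type*} [CommRing K]

/-- Homogeneous non-units of a subring. -/
def mset (F : GradedField H K) (A : Subring K) : Set K :=
  {w | F.Homogeneous w ∧ w ∈ A ∧ ∀ t ∈ A, w * t ≠ 1}

/-- The ideal of `R` generated by the homogeneous non-units of `x` and of `A`. -/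
def irIdeal (F : GradedField H K) (A x R : Subring K) : AddSubgroup K :=
  AddSubgroup.closure {w | ∃ r ∈ (R : Set K), ∃ m ∈ mset F x ∪ mset F A, w = r * m}

/-- The poset for the Zorn argument. -/
def sig (F : GradedField H K) (A x : Subring K) : Set (Subring K) :=
  {R | x ≤ R ∧ mset F A ⊆ ↑R ∧ R ≤ A ∧ (∀ w ∈ R, ∀ g, F.component g w ∈ R) ∧
    (1 : K) ∉ irIdeal F A x R}

variable (F : GradedField H K) {A x R R' : Subring K}

theorem ir_le (hM : mset F x ∪ mset F A ⊆ (R : Set K)) {w : K}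
    (hw : w ∈ irIdeal F A x R) : w ∈ R := by
  induction hw using AddSubgroup.closure_induction with
  | mem y hy =>
    obtain ⟨r, hr, m, hm, rfl⟩ := hy
    exact R.mul_mem hr (hM hm)
  | zero => exact R.zero_mem
  | add u v _ _ hu hv => exact R.add_mem hu hv
  | neg u _ hu => exact R.neg_mem hu

theorem ir_mul {r w : K} (hr : r ∈ R) (hw : w ∈ irIdeal F A x R) :
    r * w ∈ irIdeal F A x R := by
  induction hw using AddSubgroup.closure_induction with
  | mem y hy =>
    obtain ⟨r', hr', m, hm, rfl⟩ := hy
    refine AddSubgroup.subset_closure ⟨r * r', R.mul_mem hr hr', m, hm, ?_⟩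
    ring
  | zero => rw [mul_zero]; exact AddSubgroup.zero_mem _
  | add u v _ _ hu hv => rw [mul_add]; exact AddSubgroup.add_mem _ hu hv
  | neg u _ hu => rw [mul_neg]; exact AddSubgroup.neg_mem _ hu

theorem ir_mono (hRR' : R ≤ R') : irIdeal F A x R ≤ irIdeal F A x R' := by
  apply AddSubgroup.closure_mono
  rintro w ⟨r, hr, m, hm, rfl⟩
  exact ⟨r, hRR' hr, m, hm, rfl⟩

end GradedField
namespace GradedField

variable {H : Type*} [CommGroup H] [DecidableEq H] {K : Type*} [CommRing K]
variable (F : GradedField H K) {A x L : Subring K}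

theorem base_mem_sig
    (hLcomp : ∀ w ∈ L, ∀ g : H, F.component g w ∈ L)
    (hLinv : ∀ w ∈ L, ∀ t : K, w * t = 1 → t ∈ L)
    (hxL : x ≤ L) (hxgr : F.IsGradedSubring x)
    (hxv : ∀ w ∈ L, F.Homogeneous w → w ≠ 0 → w ∈ x ∨ Ring.inverse w ∈ x)
    (hAgr : F.IsGradedSubring A)
    (hAv : ∀ w : K, F.Homogeneous w → w ≠ 0 → w ∈ A ∨ Ring.inverse w ∈ A)
    (hxA : x ≤ A) :
    Subring.closure ((x : Set K) ∪ mset F A) ∈ sig F A x := by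
  classical
  set R₀ := Subring.closure ((x : Set K) ∪ mset F A) with hR₀
  have hxR₀ : x ≤ R₀ := fun w hw => Subring.subset_closure (Or.inl hw)
  have hmAR₀ : mset F A ⊆ (R₀ : Set K) := fun w hw => Subring.subset_closure (Or.inr hw)
  have hmA_A : mset F A ⊆ (A : Set K) := fun w hw => hw.2.1
  have hR₀A : R₀ ≤ A := Subring.closure_le.mpr (Set.union_subset (by exact hxA) hmA_A)
  have hcomp : ∀ w ∈ R₀, ∀ g, F.component g w ∈ R₀ := by
    intro w hw
    induction hw using Subring.closure_induction with
    | mem y hy =>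
      rcases hy with hy | hy
      · intro g; exact hxR₀ (F.component_mem_of_gradedSubring hxgr hy g)
      · intro g
        obtain ⟨h, hyh⟩ := hy.1
        rw [F.component_of_mem hyh g]
        split
        · exact hmAR₀ hy
        · exact R₀.zero_mem
    | zero => intro g; rw [F.component_zero]; exact R₀.zero_mem
    | one =>
      intro g; rw [F.component_of_mem F.one_mem g]
      split
      · exact R₀.one_mem
      · exact R₀.zero_mem
    | add u v _ _ hu hv => intro g; rw [F.component_add]; exact R₀.add_mem (hu g) (hv g)
    | neg u _ hu => intro g; rw [F.component_neg]; exact R₀.neg_mem (hu g)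
    | mul u v _ _ hu hv => intro g; exact F.component_mul_mem hu hv g
  set JA := AddSubgroup.closure {w : K | ∃ p ∈ mset F A, ∃ t ∈ (A : Set K), w = p * t}
    with hJAdef
  have hJA_A : ∀ w ∈ JA, w ∈ A := by
    intro w hw
    induction hw using AddSubgroup.closure_induction with
    | mem y hy => obtain ⟨p, hp, t, ht, rfl⟩ := hy; exact A.mul_mem hp.2.1 ht
    | zero => exact A.zero_mem
    | add u v _ _ hu hv => exact A.add_mem hu hv
    | neg u _ hu => exact A.neg_mem hu
  have hJA_mul : ∀ s ∈ A, ∀ w ∈ JA, s * w ∈ JA := by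
    intro s hs w hw
    induction hw using AddSubgroup.closure_induction with
    | mem y hy =>
      obtain ⟨p, hp, t, ht, rfl⟩ := hy
      exact AddSubgroup.subset_closure ⟨p, hp, s * t, A.mul_mem hs ht, by ring⟩
    | zero => rw [mul_zero]; exact AddSubgroup.zero_mem _
    | add u v _ _ hu hv => rw [mul_add]; exact AddSubgroup.add_mem _ hu hv
    | neg u _ hu => rw [mul_neg]; exact AddSubgroup.neg_mem _ hu
  have hJA_Z : ∀ w ∈ JA, F.component 1 w ∈ A ∧ ∀ t ∈ A, F.component 1 w * t ≠ 1 := by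
    intro w hw
    induction hw using AddSubgroup.closure_induction with
    | mem y hy =>
      obtain ⟨p, hp, t, ht, rfl⟩ := hy
      obtain ⟨⟨h, hph⟩, hpA, hpn⟩ := hp
      rw [F.component_mul_left hph t 1]
      constructor
      · exact A.mul_mem hpA (F.component_mem_of_gradedSubring hAgr ht _)
      · intro s hs heq
        refine hpn (F.component (h⁻¹ * 1) t * s)
          (A.mul_mem (F.component_mem_of_gradedSubring hAgr ht _) hs) ?_
        linear_combination heq
    | zero =>
      rw [F.component_zero]
      exact ⟨A.zero_mem, fun t _ heq => F.zero_ne_one (by rwa [zero_mul] at heq)⟩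
    | add u v _ _ hu hv =>
      rw [F.component_add]
      refine ⟨A.add_mem hu.1 hv.1, ?_⟩
      exact F.deg1_nonunit_add (fun w _ hh h0 => hAv w hh h0) le_top
        (fun _ _ t _ => Subring.mem_top t) (F.component_mem 1 u) hu.1 hu.2
        (F.component_mem 1 v) hv.1 hv.2
    | neg u _ hu =>
      rw [F.component_neg]
      refine ⟨A.neg_mem hu.1, fun t ht heq => hu.2 (-t) (A.neg_mem ht) ?_⟩
      linear_combination heq
  have hdec : ∀ w ∈ R₀, ∃ u ∈ x, ∃ v, v ∈ JA ∧ w = u + v := by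
    intro w hw
    induction hw using Subring.closure_induction with
    | mem y hy =>
      rcases hy with hy | hy
      · exact ⟨y, hy, 0, AddSubgroup.zero_mem _, (add_zero y).symm⟩
      · exact ⟨0, x.zero_mem, y,
          AddSubgroup.subset_closure ⟨y, hy, 1, A.one_mem, (mul_one y).symm⟩,
          (zero_add y).symm⟩
    | zero => exact ⟨0, x.zero_mem, 0, AddSubgroup.zero_mem _, (add_zero 0).symm⟩
    | one => exact ⟨1, x.one_mem, 0, AddSubgroup.zero_mem _, (add_zero 1).symm⟩
    | add u v _ _ hu hv =>
      obtain ⟨a1, ha1, b1, hb1, rfl⟩ := hu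
      obtain ⟨a2, ha2, b2, hb2, rfl⟩ := hv
      exact ⟨a1 + a2, x.add_mem ha1 ha2, b1 + b2, AddSubgroup.add_mem _ hb1 hb2, by ring⟩
    | neg u _ hu =>
      obtain ⟨a1, ha1, b1, hb1, rfl⟩ := hu
      exact ⟨-a1, x.neg_mem ha1, -b1, AddSubgroup.neg_mem _ hb1, by ring⟩
    | mul u v _ _ hu hv =>
      obtain ⟨a1, ha1, b1, hb1, rfl⟩ := hu
      obtain ⟨a2, ha2, b2, hb2, rfl⟩ := hv
      refine ⟨a1 * a2, x.mul_mem ha1 ha2, a1 * b2 + b1 * a2 + b1 * b2, ?_, by ring⟩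
      refine AddSubgroup.add_mem _ (AddSubgroup.add_mem _ ?_ ?_) ?_
      · exact hJA_mul a1 (hxA ha1) b2 hb2
      · have := hJA_mul a2 (hxA ha2) b1 hb1
        rwa [mul_comm] at this
      · exact hJA_mul b1 (hJA_A b1 hb1) b2 hb2
  refine ⟨hxR₀, hmAR₀, hR₀A, hcomp, ?_⟩
  intro h1
  have trap : ∀ w ∈ irIdeal F A x R₀, ∃ p q : K,
      (p ∈ F.comp 1 ∧ p ∈ x ∧ ∀ t ∈ x, p * t ≠ 1) ∧
      (q ∈ F.comp 1 ∧ q ∈ A ∧ ∀ t ∈ A, q * t ≠ 1) ∧ F.component 1 w = p + q := by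
    intro w hw
    induction hw using AddSubgroup.closure_induction with
    | mem y hy =>
      obtain ⟨r, hr, m, hm, rfl⟩ := hy
      obtain ⟨u, hu, v, hv, rfl⟩ := hdec r hr
      rcases hm with hm | hm
      · obtain ⟨⟨h, hmh⟩, hmx, hmn⟩ := hm
        have heqc : F.component 1 ((u + v) * m)
            = F.component 1 (u * m) + F.component 1 (v * m) := by
          rw [add_mul, F.component_add]
        have hum : F.component 1 (u * m) = m * F.component (h⁻¹ * 1) u := by
          rw [mul_comm u m]; exact F.component_mul_left hmh u 1
        have hvmJA : v * m ∈ JA := by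
          have := hJA_mul m (hxA hmx) v hv
          rwa [mul_comm] at this
        refine ⟨m * F.component (h⁻¹ * 1) u, F.component 1 (v * m), ⟨?_, ?_, ?_⟩,
          ⟨F.component_mem 1 _, (hJA_Z _ hvmJA).1, (hJA_Z _ hvmJA).2⟩, by rw [heqc, hum]⟩
        · have h3 := F.mul_mem hmh (F.component_mem (h⁻¹ * 1) u)
          have h2 : h * (h⁻¹ * 1) = 1 := by group
          rwa [h2] at h3
        · exact x.mul_mem hmx (F.component_mem_of_gradedSubring hxgr hu _)
        · intro t ht heq
          refine hmn (F.component (h⁻¹ * 1) u * t)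
            (x.mul_mem (F.component_mem_of_gradedSubring hxgr hu _) ht) ?_
          linear_combination heq
      · have hrm : (u + v) * m ∈ JA :=
          AddSubgroup.subset_closure ⟨m, hm, u + v, hR₀A hr, mul_comm (u + v) m⟩
        exact ⟨0, F.component 1 ((u + v) * m),
          ⟨(F.comp 1).zero_mem, x.zero_mem,
            fun t _ heq => F.zero_ne_one (by rwa [zero_mul] at heq)⟩,
          ⟨F.component_mem _ _, (hJA_Z _ hrm).1, (hJA_Z _ hrm).2⟩, (zero_add _).symm⟩
    | zero =>
      exact ⟨0, 0, ⟨(F.comp 1).zero_mem, x.zero_mem,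
          fun t _ heq => F.zero_ne_one (by rwa [zero_mul] at heq)⟩,
        ⟨(F.comp 1).zero_mem, A.zero_mem,
          fun t _ heq => F.zero_ne_one (by rwa [zero_mul] at heq)⟩,
        by rw [F.component_zero, add_zero]⟩
    | add u v _ _ hu hv =>
      obtain ⟨p1, q1, hp1, hq1, he1⟩ := hu
      obtain ⟨p2, q2, hp2, hq2, he2⟩ := hv
      refine ⟨p1 + p2, q1 + q2, ⟨(F.comp 1).add_mem hp1.1 hp2.1, x.add_mem hp1.2.1 hp2.2.1,
          F.deg1_nonunit_add hxv hxL hLinv hp1.1 hp1.2.1 hp1.2.2 hp2.1 hp2.2.1 hp2.2.2⟩,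
        ⟨(F.comp 1).add_mem hq1.1 hq2.1, A.add_mem hq1.2.1 hq2.2.1,
          F.deg1_nonunit_add (fun w _ hh h0 => hAv w hh h0) le_top
            (fun _ _ t _ => Subring.mem_top t) hq1.1 hq1.2.1 hq1.2.2
            hq2.1 hq2.2.1 hq2.2.2⟩, ?_⟩
      rw [F.component_add, he1, he2]; ring
    | neg u _ hu =>
      obtain ⟨p1, q1, hp1, hq1, he1⟩ := hu
      refine ⟨-p1, -q1, ⟨(F.comp 1).neg_mem hp1.1, x.neg_mem hp1.2.1,
          fun t ht heq => hp1.2.2 (-t) (x.neg_mem ht) (by linear_combination heq)⟩,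
        ⟨(F.comp 1).neg_mem hq1.1, A.neg_mem hq1.2.1,
          fun t ht heq => hq1.2.2 (-t) (A.neg_mem ht) (by linear_combination heq)⟩, ?_⟩
      rw [F.component_neg, he1]; ring
  obtain ⟨p, q, hp, hq, heq⟩ := trap 1 h1
  have h11 : F.component 1 (1 : K) = 1 := by rw [F.component_of_mem F.one_mem 1, if_pos rfl]
  rw [h11] at heq
  have hqx : q ∈ x := by
    have hq' : q = 1 - p := by linear_combination -heq
    rw [hq']; exact x.sub_mem x.one_mem hp.2.1
  by_cases hqn : ∀ t ∈ x, q * t ≠ 1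
  · have hsum := F.deg1_nonunit_add hxv hxL hLinv hp.1 hp.2.1 hp.2.2 hq.1 hqx hqn 1 x.one_mem
    exact hsum (by rw [mul_one]; exact heq.symm)
  · push_neg at hqn
    obtain ⟨t, ht, htq⟩ := hqn
    exact hq.2.2 t (hxA ht) htq

end GradedField
namespace GradedField

variable {H : Type*} [CommGroup H] [DecidableEq H] {K : Type*} [CommRing K]
variable (F : GradedField H K) {A x L : Subring K}

theorem exists_graded_extension
    (hLcomp : ∀ w ∈ L, ∀ g : H, F.component g w ∈ L)
    (hLinv : ∀ w ∈ L, ∀ t : K, w * t = 1 → t ∈ L)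
    (hxval : F.IsGradedValRing L x)
    (hA : F.IsGradedValRing ⊤ A)
    (hxA : x ≤ A) :
    ∃ A₀ : Subring K, F.IsGradedValRing ⊤ A₀ ∧ A₀ ≤ A ∧ A₀ ⊓ L = x := by
  classical
  obtain ⟨hxL, hxgr, hxv⟩ := hxval
  obtain ⟨-, hAgr, hAv'⟩ := hA
  have hAv : ∀ w : K, F.Homogeneous w → w ≠ 0 → w ∈ A ∨ Ring.inverse w ∈ A :=
    fun w hh h0 => hAv' w (Subring.mem_top w) hh h0
  have hbase := F.base_mem_sig hLcomp hLinv hxL hxgr hxv hAgr hAv hxA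
  have hchain : ∀ c ⊆ sig F A x, IsChain (· ≤ ·) c → ∀ y ∈ c,
      ∃ ub ∈ sig F A x, ∀ z ∈ c, z ≤ ub := by
    intro c hcS hchn y hy
    have hne : c.Nonempty := ⟨y, hy⟩
    have hdir : DirectedOn (· ≤ ·) c := hchn.directedOn
    have hmem : ∀ w : K, w ∈ sSup c ↔ ∃ R' ∈ c, w ∈ R' := fun w =>
      Subring.mem_sSup_of_directedOn hne hdir
    refine ⟨sSup c, ⟨?_, ?_, ?_, ?_, ?_⟩, fun z hz => le_sSup hz⟩
    · exact le_trans (hcS hy).1 (le_sSup hy)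
    · exact fun w hw => (le_sSup hy : y ≤ sSup c) ((hcS hy).2.1 hw)
    · intro w hw
      obtain ⟨R', hR', hwR'⟩ := (hmem w).mp hw
      exact (hcS hR').2.2.1 hwR'
    · intro w hw g
      obtain ⟨R', hR', hwR'⟩ := (hmem w).mp hw
      exact (le_sSup hR' : R' ≤ _) ((hcS hR').2.2.2.1 w hwR' g)
    · intro h1
      have hloc : ∀ w ∈ irIdeal F A x (sSup c), ∃ R' ∈ c, w ∈ irIdeal F A x R' := by
        intro w hw
        induction hw using AddSubgroup.closure_induction with
        | mem z hz =>
          obtain ⟨r, hr, m, hm, rfl⟩ := hz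
          obtain ⟨R', hR', hrR'⟩ := (hmem r).mp hr
          exact ⟨R', hR', AddSubgroup.subset_closure ⟨r, hrR', m, hm, rfl⟩⟩
        | zero => exact ⟨y, hy, AddSubgroup.zero_mem _⟩
        | add u v _ _ hu hv =>
          obtain ⟨R1, hR1, hu1⟩ := hu
          obtain ⟨R2, hR2, hv2⟩ := hv
          obtain ⟨R3, hR3, h13, h23⟩ := hdir R1 hR1 R2 hR2
          exact ⟨R3, hR3, AddSubgroup.add_mem _ (F.ir_mono h13 hu1) (F.ir_mono h23 hv2)⟩
        | neg u _ hu =>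
          obtain ⟨R1, hR1, hu1⟩ := hu
          exact ⟨R1, hR1, AddSubgroup.neg_mem _ hu1⟩
      obtain ⟨R', hR', h1R'⟩ := hloc 1 h1
      exact (hcS hR').2.2.2.2 h1R'
  obtain ⟨R, hR₀R, hRmax⟩ := zorn_le_nonempty₀ (sig F A x) hchain _ hbase
  obtain ⟨hxR, hmAR, hRA, hRcomp, hRinv⟩ := hRmax.1
  have hmax := hRmax.2
  have hM_R : mset F x ∪ mset F A ⊆ (R : Set K) := by
    rintro w (hw | hw)
    · exact hxR hw.2.1
    · exact hmAR hw
  have adjoin_rel : ∀ z : K, z ∈ A → ∀ h : H, z ∈ F.comp h → z ∉ R →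
      ∃ (N : ℕ) (c : ℕ → K), (∀ i, c i ∈ irIdeal F A x R) ∧
        (1 : K) = ∑ i ∈ Finset.range N, c i * z ^ i := by
    intro z hzA h hzh hzR
    set RA := (coeffSubring R).map (Polynomial.evalRingHom z) with hRAdef
    have hRRA : R ≤ RA := by
      intro r hr
      refine Subring.mem_map.mpr ⟨Polynomial.C r, ?_, Polynomial.eval_C⟩
      intro i
      rw [Polynomial.coeff_C]
      split
      · exact hr
      · exact R.zero_mem
    have hzRA : z ∈ RA := by
      refine Subring.mem_map.mpr ⟨Polynomial.X, ?_, Polynomial.eval_X⟩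
      intro i
      rw [Polynomial.coeff_X]
      split
      · exact R.one_mem
      · exact R.zero_mem
    have hRAA : RA ≤ A := by
      rintro w hw
      obtain ⟨p, hp, rfl⟩ := Subring.mem_map.mp hw
      show Polynomial.eval z p ∈ A
      rw [Polynomial.eval_eq_sum_range]
      exact sum_mem fun i _ => A.mul_mem (hRA (hp i)) (A.pow_mem hzA i)
    have hRAcomp : ∀ w ∈ RA, ∀ g, F.component g w ∈ RA := by
      rintro w hw g
      obtain ⟨p, hp, rfl⟩ := Subring.mem_map.mp hw
      show F.component g (Polynomial.eval z p) ∈ RA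
      rw [Polynomial.eval_eq_sum_range]
      have hsum : F.component g (∑ i ∈ Finset.range (p.natDegree + 1), p.coeff i * z ^ i)
          = ∑ i ∈ Finset.range (p.natDegree + 1), F.component g (p.coeff i * z ^ i) :=
        map_sum (F.componentHom g) _ _
      rw [hsum]
      refine sum_mem fun i _ => ?_
      rw [mul_comm (p.coeff i) (z ^ i), F.component_mul_left (F.pow_mem_comp hzh i)]
      exact RA.mul_mem (RA.pow_mem hzRA i) (hRRA (hRcomp _ (hp i) _))
    have hRAnot : RA ∉ sig F A x := fun hmem' => hzR (hmax hmem' hRRA hzRA)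
    have h1RA : (1 : K) ∈ irIdeal F A x RA := by
      by_contra h1
      exact hRAnot ⟨le_trans hxR hRRA, fun w hw => hRRA (hmAR hw), hRAA, hRAcomp, h1⟩
    have pad : ∀ (N N' : ℕ), N ≤ N' → ∀ c : ℕ → K, (∀ i, c i ∈ irIdeal F A x R) →
        ∀ w : K, w = ∑ i ∈ Finset.range N, c i * z ^ i →
        ∃ c' : ℕ → K, (∀ i, c' i ∈ irIdeal F A x R) ∧
          w = ∑ i ∈ Finset.range N', c' i * z ^ i := by
      intro N N' hNN' c hc w hw
      refine ⟨fun i => if i < N then c i else 0, fun i => ?_, ?_⟩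
      · simp only []
        split
        · exact hc i
        · exact AddSubgroup.zero_mem _
      · rw [hw]
        have h1 : ∑ i ∈ Finset.range N, c i * z ^ i
            = ∑ i ∈ Finset.range N, (if i < N then c i else 0) * z ^ i :=
          Finset.sum_congr rfl fun i hi => by rw [if_pos (Finset.mem_range.mp hi)]
        rw [h1]
        exact Finset.sum_subset (Finset.range_subset_range.mpr hNN')
          (fun i _ hiN => by rw [if_neg (by simpa using hiN), zero_mul])
    have hconv : ∀ w ∈ irIdeal F A x RA, ∃ (N : ℕ) (c : ℕ → K),
        (∀ i, c i ∈ irIdeal F A x R) ∧ w = ∑ i ∈ Finset.range N, c i * z ^ i := by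
      intro w hw
      induction hw using AddSubgroup.closure_induction with
      | mem u hu =>
        obtain ⟨r, hr, m, hm, rfl⟩ := hu
        obtain ⟨p, hp, rfl⟩ := Subring.mem_map.mp hr
        refine ⟨p.natDegree + 1, fun i => p.coeff i * m, fun i =>
          AddSubgroup.subset_closure ⟨p.coeff i, hp i, m, hm, rfl⟩, ?_⟩
        show Polynomial.eval z p * m = _
        rw [Polynomial.eval_eq_sum_range, Finset.sum_mul]
        exact Finset.sum_congr rfl fun i _ => by ring
      | zero => exact ⟨0, fun _ => 0, fun _ => AddSubgroup.zero_mem _, by simp⟩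
      | add u v _ _ hu hv =>
        obtain ⟨N1, c1, hc1, he1⟩ := hu
        obtain ⟨N2, c2, hc2, he2⟩ := hv
        obtain ⟨c1', hc1', he1'⟩ := pad N1 (max N1 N2) (le_max_left _ _) c1 hc1 u he1
        obtain ⟨c2', hc2', he2'⟩ := pad N2 (max N1 N2) (le_max_right _ _) c2 hc2 v he2
        refine ⟨max N1 N2, fun i => c1' i + c2' i,
          fun i => AddSubgroup.add_mem _ (hc1' i) (hc2' i), ?_⟩
        rw [he1', he2', ← Finset.sum_add_distrib]
        exact Finset.sum_congr rfl fun i _ => by ring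
      | neg u _ hu =>
        obtain ⟨N1, c1, hc1, he1⟩ := hu
        refine ⟨N1, fun i => -c1 i, fun i => AddSubgroup.neg_mem _ (hc1 i), ?_⟩
        rw [he1, ← Finset.sum_neg_distrib]
        exact Finset.sum_congr rfl fun i _ => by ring
    obtain ⟨N, c, hc, he⟩ := hconv 1 h1RA
    exact ⟨N, c, hc, he⟩
  have hval_R : ∀ z ∈ (⊤ : Subring K), F.Homogeneous z → z ≠ 0 →
      z ∈ R ∨ Ring.inverse z ∈ R := by
    intro z _ hzhom hz0
    obtain ⟨h, hzh⟩ := hzhom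
    obtain ⟨y, hyh, hzy⟩ := F.inv_mem hzh hz0
    have hinv : Ring.inverse z = y := ringInverse_eq hzy
    by_cases hzA : z ∈ A
    · by_cases hyA : y ∈ A
      · by_cases hzR : z ∈ R
        · exact Or.inl hzR
        by_cases hyR : y ∈ R
        · exact Or.inr (by rw [hinv]; exact hyR)
        exfalso
        have rel1 := adjoin_rel z hzA h hzh hzR
        have rel2 := adjoin_rel y hyA h⁻¹ hyh hyR
        exact chev F.zero_ne_one (fun w hw => F.ir_le hM_R hw)
          (fun r hr w hw => F.ir_mul hr hw) hRinv hzy rel1 rel2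
      · left
        exact hmAR ⟨⟨h, hzh⟩, hzA, fun t ht heq => hyA ((inv_unique hzy heq) ▸ ht)⟩
    · right
      rw [hinv]
      have hyA : y ∈ A := by
        rcases hAv z ⟨h, hzh⟩ hz0 with h' | h'
        · exact absurd h' hzA
        · rwa [hinv] at h'
      refine hmAR ⟨⟨h⁻¹, hyh⟩, hyA, fun t ht heq => hzA ?_⟩
      have ht' : t = z := inv_unique (by rw [mul_comm]; exact hzy) heq
      rwa [ht'] at ht
  refine ⟨R, ⟨le_top, F.isGradedSubring_of_components hRcomp, hval_R⟩, hRA, ?_⟩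
  apply le_antisymm
  · intro w hw
    rw [Subring.mem_inf] at hw
    obtain ⟨hwR, hwL⟩ := hw
    apply F.mem_subring_of_forall_component (S := x)
    intro g
    have hlR : F.component g w ∈ R := hRcomp w hwR g
    have hlL : F.component g w ∈ L := hLcomp w hwL g
    by_cases hl0 : F.component g w = 0
    · rw [hl0]; exact x.zero_mem
    rcases hxv _ hlL ⟨g, F.component_mem g w⟩ hl0 with h' | h'
    · exact h'
    by_cases hlx : F.component g w ∈ x
    · exact hlx
    exfalso
    obtain ⟨t, htg, hlt⟩ := F.inv_mem (F.component_mem g w) hl0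
    have htx : t ∈ x := by rw [ringInverse_eq hlt] at h'; exact h'
    have hct : t * F.component g w = 1 := by rw [mul_comm]; exact hlt
    have htm : t ∈ mset F x :=
      ⟨⟨g⁻¹, htg⟩, htx, fun s hs heq => hlx ((inv_unique hct heq) ▸ hs)⟩
    exact hRinv (AddSubgroup.subset_closure
      ⟨F.component g w, hlR, t, Or.inl htm, hlt.symm⟩)
  · exact le_inf hxR hxL

end GradedField
/-- Let `K/k₀` be an extension of `H`-graded fields, `G` a finite group of graded
automorphisms of `K` fixing `k₀` pointwise, `L = K^G`, and `ψ : P_{K/k₀} → P_{L/k₀}`,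
`A ↦ A ∩ L`.  For a point `x` of `P_{L/k₀}` with fiber `S = ψ⁻¹(x)`, the preimage under `ψ`
of the set of generalizations of `x` equals the set of generalizations of points of `S`. -/
theorem GradedField.preimage_generalizations_eq {H : Type*} [CommGroup H] [DecidableEq H]
    {K : Type*} [CommRing K] (F : GradedField H K) (k₀ : Subring K)
    (hk₀ : F.IsGradedSubfield k₀) (G : Subgroup (RingAut K)) [Finite G]
    (hG : ∀ σ ∈ G, F.IsGradedAut σ) (hfix : ∀ σ ∈ G, ∀ x ∈ k₀, σ x = x)
    (x : Subring K) (hx : F.IsGradedValRing (fixedSubring G) x) (hxk : k₀ ≤ x) :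
    {A : Subring K | (F.IsGradedValRing ⊤ A ∧ k₀ ≤ A) ∧ x ≤ A ⊓ fixedSubring G} =
      {A : Subring K | (F.IsGradedValRing ⊤ A ∧ k₀ ≤ A) ∧
        ∃ A₀ : Subring K, ((F.IsGradedValRing ⊤ A₀ ∧ k₀ ≤ A₀) ∧
          A₀ ⊓ fixedSubring G = x) ∧ A₀ ≤ A} := by
  classical
  have hLinv : ∀ w ∈ fixedSubring G, ∀ t : K, w * t = 1 → t ∈ fixedSubring G := by
    intro w hw t hwt σ hσ
    have h1 : σ w = w := hw σ hσ
    have h2 : σ w * σ t = 1 := by rw [← map_mul, hwt, map_one]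
    rw [h1] at h2
    exact (GradedField.inv_unique h2 hwt).symm
  have hLcomp : ∀ w ∈ fixedSubring G, ∀ g : H, F.component g w ∈ fixedSubring G := by
    intro w hw g σ hσ
    have hc : ∀ h', (fun h' => σ (F.component h' w)) h' ∈ F.comp h' :=
      fun h' => hG σ hσ h' _ (F.component_mem h' w)
    have hs : ∀ h' ∉ (F.decompose w).support, σ (F.component h' w) = 0 := by
      intro h' hh'
      rw [F.component_eq_zero_of_not_mem_support hh', map_zero]
    have hsum : ∑ h' ∈ (F.decompose w).support, σ (F.component h' w) = w := by
      rw [← map_sum, F.sum_support_component, hw σ hσ]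
    have huq := F.uniq _ _ hc hs g
    rw [hsum] at huq
    exact huq.symm
  ext A
  simp only [Set.mem_setOf_eq]
  constructor
  · rintro ⟨hA, hxAL⟩
    refine ⟨hA, ?_⟩
    have hxA : x ≤ A := le_trans hxAL inf_le_left
    obtain ⟨A₀, hA₀val, hA₀A, hA₀L⟩ :=
      F.exists_graded_extension hLcomp hLinv hx hA.1 hxA
    have hxA₀ : x ≤ A₀ := by rw [← hA₀L]; exact inf_le_left
    exact ⟨A₀, ⟨⟨hA₀val, le_trans hxk hxA₀⟩, hA₀L⟩, hA₀A⟩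
  · rintro ⟨hA, A₀, ⟨⟨hA₀val, hA₀k⟩, hA₀L⟩, hA₀A⟩
    refine ⟨hA, ?_⟩
    rw [← hA₀L]
    exact inf_le_inf_right _ hA₀A
end ZR
end

section
/- Let K/L be an extension of H-graded fields. The assignment F₁ ↦ F₁ ⊗_{L₁} L gives an inclusion-preserving bijection between intermediate fields of K₁/L₁ and intermediate graded fields F of K/L satisfying e_{F/L} = 1. In particular F = K₁ ⊗_{L₁} L is the unique intermediate graded field with e_{F/L} = 1 and f_{K/F} = 1, and it contains every intermediate graded field F' with e_{F'/L} = 1. -/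
open scoped DirectSum

section ZR

variable {H : Type*} [CommGroup H] [DecidableEq H] {K : Type*} [CommRing K]

namespace GradedField
variable {H : Type*} [CommGroup H] [DecidableEq H] {K : Type*} [CommRing K] (F : GradedField H K)


lemma aux_ring_inverse_eq {x y : K} (h : x * y = 1) : Ring.inverse x = y := by
  have hu : IsUnit x := IsUnit.of_mul_eq_one y h
  calc Ring.inverse x = Ring.inverse x * (x * y) := by rw [h, mul_one]
    _ = Ring.inverse x * x * y := by ring
    _ = y := by rw [Ring.inverse_mul_cancel x hu, one_mul]

/-- The degree-`h` piece of `M ⊗_{L₁} L` inside `K`. -/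
def InPiece (L M : Subring K) (h : H) (x : K) : Prop :=
  ∃ m ∈ M, ∃ l ∈ L, l ∈ F.comp h ∧ x = m * l

variable {L M : Subring K}

lemma aux_piece_comp (hM1 : M ≤ F.oneComponent) {h : H} {x : K}
    (hx : F.InPiece L M h x) : x ∈ F.comp h := by
  obtain ⟨m, hm, l, _, hlc, rfl⟩ := hx
  simpa using F.mul_mem (F.mem_oneComponent.mp (hM1 hm)) hlc

lemma aux_piece_zero (h : H) : F.InPiece L M h 0 :=
  ⟨0, M.zero_mem, 0, L.zero_mem, (F.comp h).zero_mem, (zero_mul 0).symm⟩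

lemma aux_piece_neg {h : H} {x : K} (hx : F.InPiece L M h x) : F.InPiece L M h (-x) := by
  obtain ⟨m, hm, l, hl, hlc, rfl⟩ := hx
  exact ⟨-m, M.neg_mem hm, l, hl, hlc, (neg_mul m l).symm⟩

lemma aux_piece_add (hL : F.IsGradedSubfield L) (hLM : F.oneComponent ⊓ L ≤ M)
    {h : H} {x y : K} (hx : F.InPiece L M h x) (hy : F.InPiece L M h y) :
    F.InPiece L M h (x + y) := by
  obtain ⟨m₁, hm₁, l₁, hl₁, hl₁c, rfl⟩ := hx
  obtain ⟨m₂, hm₂, l₂, hl₂, hl₂c, rfl⟩ := hy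
  by_cases h1 : l₁ = 0
  · subst h1
    simpa using ⟨m₂, hm₂, l₂, hl₂, hl₂c, rfl⟩
  · obtain ⟨z, hz, hlz⟩ := F.inv_mem hl₁c h1
    have hzL : z ∈ L := by
      rw [← aux_ring_inverse_eq hlz]
      exact hL.inv_mem l₁ hl₁ ⟨h, hl₁c⟩ h1
    have hc1 : l₂ * z ∈ F.comp 1 := by
      have := F.mul_mem hl₂c hz; rwa [mul_inv_cancel] at this
    have hM : l₂ * z ∈ M := hLM ⟨hc1, L.mul_mem hl₂ hzL⟩
    refine ⟨m₁ + m₂ * (l₂ * z), M.add_mem hm₁ (M.mul_mem hm₂ hM), l₁, hl₁, hl₁c, ?_⟩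
    have : z * l₁ = 1 := by rw [mul_comm]; exact hlz
    calc m₁ * l₁ + m₂ * l₂ = m₁ * l₁ + m₂ * l₂ * (z * l₁) := by rw [this, mul_one]
      _ = (m₁ + m₂ * (l₂ * z)) * l₁ := by ring

lemma aux_piece_mul {h h' : H} {x y : K} (hx : F.InPiece L M h x) (hy : F.InPiece L M h' y) :
    F.InPiece L M (h * h') (x * y) := by
  obtain ⟨m₁, hm₁, l₁, hl₁, hl₁c, rfl⟩ := hx
  obtain ⟨m₂, hm₂, l₂, hl₂, hl₂c, rfl⟩ := hy
  exact ⟨m₁ * m₂, M.mul_mem hm₁ hm₂, l₁ * l₂, L.mul_mem hl₁ hl₂, F.mul_mem hl₁c hl₂c,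
    by ring⟩

/-- `x` is a finite sum of homogeneous pieces. -/
def SumRep (L M : Subring K) (x : K) : Prop :=
  ∃ s : Finset H, ∃ f : H → K, (∀ h, F.InPiece L M h (f h)) ∧ (∀ h ∉ s, f h = 0) ∧
    x = ∑ h ∈ s, f h

lemma aux_sumrep_of_piece {h : H} {x : K} (hx : F.InPiece L M h x) : F.SumRep L M x := by
  classical
  refine ⟨{h}, fun h' => if h' = h then x else 0, ?_, ?_, ?_⟩
  · intro h'
    by_cases e : h' = h
    · subst e; simpa using hx
    · simp only [if_neg e]; exact F.aux_piece_zero h'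
  · intro h' hh'; simp only [Finset.mem_singleton] at hh'; simp only [if_neg hh']
  · simp

lemma aux_sumrep_zero : F.SumRep L M 0 :=
  ⟨∅, fun _ => 0, fun h => F.aux_piece_zero h, fun _ _ => rfl, by simp⟩

lemma aux_sumrep_neg {x : K} (hx : F.SumRep L M x) : F.SumRep L M (-x) := by
  obtain ⟨s, f, hf, h0, rfl⟩ := hx
  exact ⟨s, fun h => -f h, fun h => F.aux_piece_neg (hf h),
    fun h hh => by dsimp only; rw [h0 h hh, neg_zero], by rw [← Finset.sum_neg_distrib]⟩

lemma aux_sumrep_add (hL : F.IsGradedSubfield L) (hLM : F.oneComponent ⊓ L ≤ M)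
    {x y : K} (hx : F.SumRep L M x) (hy : F.SumRep L M y) : F.SumRep L M (x + y) := by
  classical
  obtain ⟨s₁, f₁, hf₁, h0₁, rfl⟩ := hx
  obtain ⟨s₂, f₂, hf₂, h0₂, rfl⟩ := hy
  refine ⟨s₁ ∪ s₂, fun h => f₁ h + f₂ h,
    fun h => F.aux_piece_add hL hLM (hf₁ h) (hf₂ h),
    fun h hh => by
      dsimp only
      rw [h0₁ h (fun c => hh (Finset.mem_union_left _ c)),
        h0₂ h (fun c => hh (Finset.mem_union_right _ c)), add_zero], ?_⟩
  rw [Finset.sum_add_distrib]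
  congr 1
  · exact Finset.sum_subset Finset.subset_union_left (fun h _ hh => h0₁ h hh)
  · exact Finset.sum_subset Finset.subset_union_right (fun h _ hh => h0₂ h hh)

lemma aux_sumrep_sum (hL : F.IsGradedSubfield L) (hLM : F.oneComponent ⊓ L ≤ M)
    {ι : Type*} (s : Finset ι) (f : ι → K) (hf : ∀ i ∈ s, F.SumRep L M (f i)) :
    F.SumRep L M (∑ i ∈ s, f i) := by
  classical
  induction s using Finset.induction_on with
  | empty => simpa using F.aux_sumrep_zero
  | insert _ _ hi ih =>
    rw [Finset.sum_insert hi]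
    exact F.aux_sumrep_add hL hLM (hf _ (Finset.mem_insert_self _ _))
      (ih fun i hi' => hf i (Finset.mem_insert_of_mem hi'))

/-- Every element of `Subring.closure (M ∪ L)` is a sum of pieces. -/
lemma aux_sumrep_of_mem_closure (hL : F.IsGradedSubfield L)
    (hLM : F.oneComponent ⊓ L ≤ M) {x : K}
    (hx : x ∈ Subring.closure ((M : Set K) ∪ (L : Set K))) : F.SumRep L M x := by
  induction hx using Subring.closure_induction with
  | mem y hy =>
    rcases hy with hy | hy
    · exact F.aux_sumrep_of_piece ⟨y, hy, 1, L.one_mem, F.one_mem, (mul_one y).symm⟩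
    · have hy' := hL.graded y hy
      clear hy
      induction hy' using AddSubgroup.closure_induction with
      | mem z hz =>
        obtain ⟨hzL, h, hzc⟩ := hz
        exact F.aux_sumrep_of_piece ⟨1, M.one_mem, z, hzL, hzc, (one_mul z).symm⟩
      | zero => exact F.aux_sumrep_zero
      | add a b _ _ ha hb => exact F.aux_sumrep_add hL hLM ha hb
      | neg a _ ha => exact F.aux_sumrep_neg ha
  | zero => exact F.aux_sumrep_zero
  | one => exact F.aux_sumrep_of_piece ⟨1, M.one_mem, 1, L.one_mem, F.one_mem, (mul_one 1).symm⟩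
  | add a b _ _ ha hb => exact F.aux_sumrep_add hL hLM ha hb
  | neg a _ ha => exact F.aux_sumrep_neg ha
  | mul a b _ _ ha hb =>
    obtain ⟨s₁, f₁, hf₁, h0₁, rfl⟩ := ha
    obtain ⟨s₂, f₂, hf₂, h0₂, rfl⟩ := hb
    rw [Finset.sum_mul_sum]
    exact F.aux_sumrep_sum hL hLM _ _ fun i hi =>
      F.aux_sumrep_sum hL hLM _ _ fun j hj =>
        F.aux_sumrep_of_piece (F.aux_piece_mul (hf₁ i) (hf₂ j))

/-- Uniqueness of homogeneous decomposition: a homogeneous element with a sum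
representation lies in the corresponding piece. -/
lemma aux_piece_of_homog (hM1 : M ≤ F.oneComponent) {g : H} {x : K}
    (hx : x ∈ F.comp g) (hr : F.SumRep L M x) : F.InPiece L M g x := by
  classical
  obtain ⟨s, f, hf, h0, hsum⟩ := hr
  set d : ⨁ h, F.comp h :=
    ∑ h ∈ s, DirectSum.of (fun h => F.comp h) h ⟨f h, F.aux_piece_comp hM1 (hf h)⟩ with hd
  have h1 : DirectSum.coeAddMonoidHom (fun h => F.comp h) d = x := by
    rw [hd, map_sum, hsum]
    exact Finset.sum_congr rfl fun h _ => DirectSum.coeAddMonoidHom_of _ _ _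
  have h2 : DirectSum.coeAddMonoidHom (fun h => F.comp h)
      (DirectSum.of (fun h => F.comp h) g ⟨x, hx⟩) = x :=
    DirectSum.coeAddMonoidHom_of _ _ _
  have heq : d = DirectSum.of (fun h => F.comp h) g ⟨x, hx⟩ :=
    F.isInternal.injective (h1.trans h2.symm)
  have hg : ((d g : F.comp g) : K) = x := by
    rw [heq, DirectSum.of_eq_same]
  have hg' : ((d g : F.comp g) : K) = if g ∈ s then f g else 0 := by
    rw [hd, DFinsupp.finset_sum_apply, AddSubmonoidClass.coe_finset_sum]
    calc (∑ h ∈ s, ((DirectSum.of (fun h => F.comp h) h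
            ⟨f h, F.aux_piece_comp hM1 (hf h)⟩ g : F.comp g) : K))
        = ∑ h ∈ s, if h = g then f h else 0 := by
          refine Finset.sum_congr rfl fun h _ => ?_
          by_cases e : h = g
          · subst e; rw [DirectSum.of_eq_same, if_pos rfl]
          · rw [DirectSum.of_eq_of_ne _ _ _ (Ne.symm e), if_neg e]; rfl
      _ = if g ∈ s then f g else 0 := Finset.sum_ite_eq' s g f
  rw [hg'] at hg
  by_cases hgs : g ∈ s
  · rw [if_pos hgs] at hg; rw [← hg]; exact hf g
  · rw [if_neg hgs] at hg; rw [← hg]; exact F.aux_piece_zero g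

lemma aux_piece_mem_closure {h : H} {x : K} (hx : F.InPiece L M h x) :
    x ∈ Subring.closure ((M : Set K) ∪ (L : Set K)) := by
  obtain ⟨m, hm, l, hl, _, rfl⟩ := hx
  refine Subring.mul_mem _ (Subring.subset_closure ?_) (Subring.subset_closure ?_)
  · exact Set.mem_union_left _ hm
  · exact Set.mem_union_right _ hl

end GradedField

/-- For an extension `K/L` of `H`-graded fields, the assignment `M ↦ M ⊗_{L₁} L` (realized
inside `K` as the subring generated by `M ∪ L`) is an inclusion-preserving bijection between
intermediate fields of `K₁/L₁` and intermediate graded fields `F'` of `K/L` with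
`e_{F'/L} = 1`.  In particular `K₁ ⊗_{L₁} L` is the unique intermediate graded field with
`e = 1` and `f_{K/·} = 1`, and it contains every intermediate graded field with `e = 1`. -/
theorem GradedField.intermediate_unramified_bijection {H : Type*} [CommGroup H]
    [DecidableEq H] {K : Type*} [CommRing K] (F : GradedField H K) (L : Subring K)
    (hL : F.IsGradedSubfield L) :
    -- the map lands in intermediate graded fields with `e = 1`, and `F'₁ = M`
    (∀ M : Subring K, M ≤ F.oneComponent → F.oneComponent ⊓ L ≤ M →
      (∀ x ∈ M, x ≠ 0 → Ring.inverse x ∈ M) →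
      F.IsGradedSubfield (Subring.closure ((M : Set K) ∪ (L : Set K))) ∧
        L ≤ Subring.closure ((M : Set K) ∪ (L : Set K)) ∧
        Subring.closure ((M : Set K) ∪ (L : Set K)) ⊓ F.oneComponent = M ∧
        (∀ h : H, (∃ x ∈ F.comp h, x ≠ 0 ∧ x ∈ Subring.closure ((M : Set K) ∪ (L : Set K)))
          ↔ ∃ x ∈ F.comp h, x ≠ 0 ∧ x ∈ L)) ∧
    -- surjectivity: every intermediate graded field with `e = 1` arises this way
    (∀ F' : Subring K, F.IsGradedSubfield F' → L ≤ F' →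
      (∀ h : H, (∃ x ∈ F.comp h, x ≠ 0 ∧ x ∈ F') ↔ ∃ x ∈ F.comp h, x ≠ 0 ∧ x ∈ L) →
      F' = Subring.closure ((↑(F' ⊓ F.oneComponent) : Set K) ∪ (L : Set K))) ∧
    -- inclusion-preserving in both directions
    (∀ M M' : Subring K, M ≤ F.oneComponent → F.oneComponent ⊓ L ≤ M →
      (∀ x ∈ M, x ≠ 0 → Ring.inverse x ∈ M) →
      M' ≤ F.oneComponent → F.oneComponent ⊓ L ≤ M' →
      (∀ x ∈ M', x ≠ 0 → Ring.inverse x ∈ M') →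
      (M ≤ M' ↔ Subring.closure ((M : Set K) ∪ (L : Set K)) ≤
        Subring.closure ((M' : Set K) ∪ (L : Set K)))) ∧
    -- `K₁ ⊗_{L₁} L` has `e = 1` and `f_{K/·} = 1`, and contains all `F'` with `e = 1`
    (∀ h : H, (∃ x ∈ F.comp h, x ≠ 0 ∧
        x ∈ Subring.closure ((F.oneComponent : Set K) ∪ (L : Set K))) ↔
      ∃ x ∈ F.comp h, x ≠ 0 ∧ x ∈ L) ∧
    F.oneComponent ≤ Subring.closure ((F.oneComponent : Set K) ∪ (L : Set K)) ∧
    ∀ F' : Subring K, F.IsGradedSubfield F' → L ≤ F' →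
      (∀ h : H, (∃ x ∈ F.comp h, x ≠ 0 ∧ x ∈ F') ↔ ∃ x ∈ F.comp h, x ≠ 0 ∧ x ∈ L) →
      F' ≤ Subring.closure ((F.oneComponent : Set K) ∪ (L : Set K)) := by
  classical
  have part1 : ∀ M : Subring K, M ≤ F.oneComponent → F.oneComponent ⊓ L ≤ M →
      (∀ x ∈ M, x ≠ 0 → Ring.inverse x ∈ M) →
      F.IsGradedSubfield (Subring.closure ((M : Set K) ∪ (L : Set K))) ∧
        L ≤ Subring.closure ((M : Set K) ∪ (L : Set K)) ∧
        Subring.closure ((M : Set K) ∪ (L : Set K)) ⊓ F.oneComponent = M ∧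
        (∀ h : H, (∃ x ∈ F.comp h, x ≠ 0 ∧ x ∈ Subring.closure ((M : Set K) ∪ (L : Set K)))
          ↔ ∃ x ∈ F.comp h, x ≠ 0 ∧ x ∈ L) := by
    intro M hM1 hLM hMinv
    have key : ∀ {g : H} {x : K}, x ∈ F.comp g →
        x ∈ Subring.closure ((M : Set K) ∪ (L : Set K)) → F.InPiece L M g x :=
      fun hx hxc => F.aux_piece_of_homog hM1 hx (F.aux_sumrep_of_mem_closure hL hLM hxc)
    have hLle : L ≤ Subring.closure ((M : Set K) ∪ (L : Set K)) :=
      fun x hx => Subring.subset_closure (Set.mem_union_right _ hx)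
    refine ⟨⟨?_, ?_⟩, hLle, ?_, ?_⟩
    · -- graded
      intro x hx
      obtain ⟨s, f, hf, h0, rfl⟩ := F.aux_sumrep_of_mem_closure hL hLM hx
      refine AddSubgroup.sum_mem _ fun h _ => AddSubgroup.subset_closure ?_
      exact ⟨F.aux_piece_mem_closure (hf h), ⟨h, F.aux_piece_comp hM1 (hf h)⟩⟩
    · -- inv_mem
      rintro x hx ⟨g, hg⟩ hx0
      obtain ⟨m, hm, l, hlL, hlc, rfl⟩ := key hg hx
      have hm0 : m ≠ 0 := fun e => hx0 (by rw [e, zero_mul])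
      have hl0 : l ≠ 0 := fun e => hx0 (by rw [e, mul_zero])
      obtain ⟨y, hy, hmy⟩ := F.inv_mem (F.mem_oneComponent.mp (hM1 hm)) hm0
      obtain ⟨z, hz, hlz⟩ := F.inv_mem hlc hl0
      have hinv : Ring.inverse (m * l) = y * z := by
        apply aux_ring_inverse_eq
        calc m * l * (y * z) = (m * y) * (l * z) := by ring
          _ = 1 := by rw [hmy, hlz, mul_one]
      rw [hinv]
      have hyM : y ∈ M := by
        rw [← aux_ring_inverse_eq hmy]; exact hMinv m hm hm0
      have hzL : z ∈ L := by
        rw [← aux_ring_inverse_eq hlz]; exact hL.inv_mem l hlL ⟨g, hlc⟩ hl0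
      exact F.aux_piece_mem_closure ⟨y, hyM, z, hzL, hz, rfl⟩
    · -- inf = M
      apply le_antisymm
      · intro x hx
        rw [Subring.mem_inf] at hx
        obtain ⟨m, hm, l, hlL, hlc, rfl⟩ := key (F.mem_oneComponent.mp hx.2) hx.1
        exact M.mul_mem hm (hLM (Subring.mem_inf.mpr ⟨hlc, hlL⟩))
      · intro m hm
        exact Subring.mem_inf.mpr ⟨Subring.subset_closure (Set.mem_union_left _ hm), hM1 hm⟩
    · intro h
      constructor
      · rintro ⟨x, hc, hne, hR⟩
        obtain ⟨m, hm, l, hlL, hlc, rfl⟩ := key hc hR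
        exact ⟨l, hlc, fun e => hne (by rw [e, mul_zero]), hlL⟩
      · rintro ⟨x, hc, hne, hxL⟩
        exact ⟨x, hc, hne, hLle hxL⟩
  have part2 : ∀ F' : Subring K, F.IsGradedSubfield F' → L ≤ F' →
      (∀ h : H, (∃ x ∈ F.comp h, x ≠ 0 ∧ x ∈ F') ↔ ∃ x ∈ F.comp h, x ≠ 0 ∧ x ∈ L) →
      F' = Subring.closure ((↑(F' ⊓ F.oneComponent) : Set K) ∪ (L : Set K)) := by
    intro F' hF' hLF' he
    apply le_antisymm
    · intro x hx
      have hx' := hF'.graded x hx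
      have hsub : {y : K | y ∈ F' ∧ F.Homogeneous y} ⊆
          ((Subring.closure ((↑(F' ⊓ F.oneComponent) : Set K) ∪
            (L : Set K))).toAddSubgroup : Set K) := by
        rintro y ⟨hyF', g, hyc⟩
        by_cases hy0 : y = 0
        · subst hy0; exact zero_mem _
        · obtain ⟨l, hlc, hl0, hlL⟩ := (he g).mp ⟨y, hyc, hy0, hyF'⟩
          obtain ⟨z, hz, hlz⟩ := F.inv_mem hlc hl0
          have hzL : z ∈ L := by
            rw [← aux_ring_inverse_eq hlz]; exact hL.inv_mem l hlL ⟨g, hlc⟩ hl0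
          have hyz1 : y * z ∈ F.comp 1 := by
            have := F.mul_mem hyc hz; rwa [mul_inv_cancel] at this
          have hyzF' : y * z ∈ F' := F'.mul_mem hyF' (hLF' hzL)
          have hy' : y = (y * z) * l := by
            rw [mul_assoc, mul_comm z l, hlz, mul_one]
          rw [hy']
          refine Subring.mul_mem _ (Subring.subset_closure ?_) (Subring.subset_closure ?_)
          · exact Set.mem_union_left _ (Subring.mem_inf.mpr ⟨hyzF', hyz1⟩)
          · exact Set.mem_union_right _ hlL
      exact (AddSubgroup.closure_le _).mpr hsub hx'
    · refine Subring.closure_le.mpr ?_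
      rintro y (hy | hy)
      · exact (Subring.mem_inf.mp hy).1
      · exact hLF' hy
  have part3 : ∀ M M' : Subring K, M ≤ F.oneComponent → F.oneComponent ⊓ L ≤ M →
      (∀ x ∈ M, x ≠ 0 → Ring.inverse x ∈ M) →
      M' ≤ F.oneComponent → F.oneComponent ⊓ L ≤ M' →
      (∀ x ∈ M', x ≠ 0 → Ring.inverse x ∈ M') →
      (M ≤ M' ↔ Subring.closure ((M : Set K) ∪ (L : Set K)) ≤
        Subring.closure ((M' : Set K) ∪ (L : Set K))) := by
    intro M M' hM1 hLM hMinv hM'1 hLM' hM'inv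
    constructor
    · intro hMM'
      exact Subring.closure_mono
        (Set.union_subset_union_left _ (SetLike.coe_subset_coe.mpr hMM'))
    · intro hle x hx
      have hxc : x ∈ Subring.closure ((M' : Set K) ∪ (L : Set K)) :=
        hle (Subring.subset_closure (Set.mem_union_left _ hx))
      have h := (part1 M' hM'1 hLM' hM'inv).2.2.1
      rw [← h]
      exact Subring.mem_inf.mpr ⟨hxc, hM1 hx⟩
  have h1inv : ∀ x ∈ F.oneComponent, x ≠ 0 → Ring.inverse x ∈ F.oneComponent := by
    intro x hx hx0
    obtain ⟨y, hy, hxy⟩ := F.inv_mem (F.mem_oneComponent.mp hx) hx0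
    rw [aux_ring_inverse_eq hxy]
    rw [inv_one] at hy
    exact hy
  have hP1 := part1 F.oneComponent le_rfl inf_le_left h1inv
  refine ⟨part1, part2, part3, hP1.2.2.2,
    fun x hx => Subring.subset_closure (Set.mem_union_left _ hx), ?_⟩
  intro F' hF' hLF' he
  rw [part2 F' hF' hLF' he]
  refine Subring.closure_mono (Set.union_subset_union_left _ ?_)
  intro x hx
  exact (Subring.mem_inf.mp hx).2
end ZR
end

section
/- Let K be an H-graded field, L ⊆ K a graded subfield with K₁ = L₁ (so f_{K/L} = 1). Then L = ⊕_{r ∈ ρ(L^×)} K_r, and the map L ↦ ρ(L^×) is an inclusion-preserving bijection between graded subfields L of K with f_{K/L} = 1 and subgroups of ρ(K^×); moreover K/L is a finite extension if and only if the index of ρ(L^×) in ρ(K^×) is finite, in which case [K:L] equals that index. -/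
open scoped DirectSum

section ZR

variable {H : Type*} [CommGroup H] [DecidableEq H] {K : Type*} [CommRing K]

section Aux

namespace GradedField

variable {H : Type*} [CommGroup H] [DecidableEq H] {K : Type*} [CommRing K]
variable (F : GradedField H K)

/-- The decomposition as an additive equivalence. -/
noncomputable def addEquivK : (⨁ h : H, ↥(F.comp h)) ≃+ K :=
  AddEquiv.ofBijective (DirectSum.coeAddMonoidHom fun h => F.comp h) F.isInternal

/-- Projection onto the degree-`h` component. -/
noncomputable def proj (h : H) (x : K) : K := (F.addEquivK.symm x h : K)

theorem proj_add (h : H) (x y : K) : F.proj h (x + y) = F.proj h x + F.proj h y := by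
  unfold proj; rw [map_add]; rfl

theorem proj_zero (h : H) : F.proj h 0 = 0 := by
  unfold proj; rw [map_zero]; rfl

theorem proj_neg (h : H) (x : K) : F.proj h (-x) = -F.proj h x := by
  unfold proj; rw [map_neg]; rfl

theorem symm_of_mem {h : H} {x : K} (hx : x ∈ F.comp h) :
    F.addEquivK.symm x = DirectSum.of (fun g => ↥(F.comp g)) h ⟨x, hx⟩ := by
  rw [AddEquiv.symm_apply_eq]
  exact (DirectSum.coeAddMonoidHom_of _ h ⟨x, hx⟩).symm

theorem proj_of_mem_same {h : H} {x : K} (hx : x ∈ F.comp h) : F.proj h x = x := by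
  unfold proj; rw [F.symm_of_mem hx, DirectSum.of_eq_same]

theorem proj_of_mem_ne {g h : H} {x : K} (hx : x ∈ F.comp h) (hne : g ≠ h) :
    F.proj g x = 0 := by
  unfold proj; rw [F.symm_of_mem hx, DirectSum.of_eq_of_ne _ _ _ hne]; rfl

theorem proj_mem (h : H) (x : K) : F.proj h x ∈ F.comp h := (F.addEquivK.symm x h).2

theorem eq_zero_of_proj_eq_zero {x : K} (hx : ∀ h, F.proj h x = 0) : x = 0 := by
  have : F.addEquivK.symm x = 0 := by
    refine DFinsupp.ext fun h => Subtype.ext ?_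
    exact hx h
  have := congrArg F.addEquivK this
  rwa [AddEquiv.apply_symm_apply, map_zero] at this

/-- Induction over homogeneous elements. -/
theorem homogeneous_induction {p : K → Prop} (h0 : p 0)
    (hadd : ∀ x y, p x → p y → p (x + y)) (hhom : ∀ (h : H) (x : K), x ∈ F.comp h → p x) :
    ∀ x, p x := by
  intro x
  obtain ⟨d, rfl⟩ := F.addEquivK.surjective x
  induction d using DirectSum.induction_on with
  | zero => simpa using h0
  | of i x =>
      have : F.addEquivK (DirectSum.of (fun g => ↥(F.comp g)) i x) = (x : K) :=
        DirectSum.coeAddMonoidHom_of _ i x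
      rw [this]; exact hhom i x x.2
  | add x y hx hy => rw [map_add]; exact hadd _ _ hx hy

theorem proj_mul_of_mem {r : H} {c : K} (hc : c ∈ F.comp r) (g : H) (y : K) :
    F.proj (g * r) (y * c) = F.proj g y * c := by
  induction y using F.homogeneous_induction with
  | h0 => rw [zero_mul, proj_zero, proj_zero, zero_mul]
  | hadd x y hx hy => rw [add_mul, proj_add, proj_add, hx, hy, add_mul]
  | hhom s x hx =>
      by_cases hgs : g = s
      · subst hgs
        rw [F.proj_of_mem_same hx, F.proj_of_mem_same (F.mul_mem hx hc)]
      · rw [F.proj_of_mem_ne hx hgs, zero_mul,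
          F.proj_of_mem_ne (F.mul_mem hx hc) (fun h => hgs (mul_right_cancel h))]

theorem mul_ne_zero_homog {g h : H} {x y : K} (hx : x ∈ F.comp g) (hy : y ∈ F.comp h)
    (hx0 : x ≠ 0) (hy0 : y ≠ 0) : x * y ≠ 0 := by
  obtain ⟨x', _, hxx'⟩ := F.inv_mem hx hx0
  obtain ⟨y', _, hyy'⟩ := F.inv_mem hy hy0
  intro h0
  have h1 : x * y * (x' * y') = 1 := by rw [mul_mul_mul_comm, hxx', hyy', one_mul]
  rw [h0, zero_mul] at h1
  exact F.zero_ne_one h1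

/-- The union of components with degrees in `V`. -/
def compSet (V : Subgroup H) : Set K := {y : K | ∃ r ∈ V, y ∈ F.comp r}

theorem proj_eq_zero_of_mem_closure {V : Subgroup H} {x : K}
    (hx : x ∈ AddSubgroup.closure (F.compSet V)) {h : H} (hh : h ∉ V) :
    F.proj h x = 0 := by
  induction hx using AddSubgroup.closure_induction with
  | mem y hy =>
      obtain ⟨r, hrV, hyr⟩ := hy
      exact F.proj_of_mem_ne hyr (fun he => hh (he ▸ hrV))
  | zero => exact F.proj_zero h
  | add x y _ _ hx hy => rw [proj_add, hx, hy, add_zero]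
  | neg x _ hx => rw [proj_neg, hx, neg_zero]

variable {L : Subring K}

theorem comp_subset_of_mem_valueGroup (hLinv : ∀ x ∈ L, F.Homogeneous x → x ≠ 0 →
    Ring.inverse x ∈ L) (hf : F.oneComponent ≤ L) {r : H}
    (hr : r ∈ F.valueGroup L hLinv) {y : K} (hy : y ∈ F.comp r) : y ∈ L := by
  obtain ⟨x, hx, hx0, hxL⟩ := hr
  obtain ⟨x', hx', hxx'⟩ := F.inv_mem hx hx0
  have h1 : y * x' ∈ F.comp 1 := by
    have := F.mul_mem hy hx'
    rwa [mul_inv_cancel] at this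
  have : y = (y * x') * x := by
    rw [mul_assoc, mul_comm x' x, hxx', mul_one]
  rw [this]
  exact L.mul_mem (hf h1) hxL

/-- Part 1 in lemma form. -/
theorem mem_iff_mem_closure (hL : F.IsGradedSubfield L) (hf : F.oneComponent ≤ L) (x : K) :
    x ∈ L ↔ x ∈ AddSubgroup.closure (F.compSet (F.valueGroup L hL.inv_mem)) := by
  constructor
  · intro hx
    refine AddSubgroup.closure_mono ?_ (hL.graded x hx)
    rintro y ⟨hyL, h, hy⟩
    by_cases hy0 : y = 0
    · exact ⟨1, (F.valueGroup L hL.inv_mem).one_mem, by rw [hy0]; exact (F.comp 1).zero_mem⟩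
    · exact ⟨h, ⟨y, hy, hy0, hyL⟩, hy⟩
  · intro hx
    have hle : AddSubgroup.closure (F.compSet (F.valueGroup L hL.inv_mem)) ≤
        L.toAddSubgroup := by
      refine (AddSubgroup.closure_le L.toAddSubgroup).mpr ?_
      rintro y ⟨r, hr, hy⟩
      exact F.comp_subset_of_mem_valueGroup hL.inv_mem hf hr hy
    exact hle hx

theorem ringInverse_eq_s16 {x y : K} (hxy : x * y = 1) : Ring.inverse x = y := by
  have hu : IsUnit x := IsUnit.of_mul_eq_one y hxy
  calc Ring.inverse x = Ring.inverse x * (x * y) := by rw [hxy, mul_one]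
    _ = Ring.inverse x * x * y := by ring
    _ = y := by rw [Ring.inverse_mul_cancel x hu, one_mul]

theorem proj_sum {ι : Type*} (h : H) (s : Finset ι) (f : ι → K) :
    F.proj h (∑ i ∈ s, f i) = ∑ i ∈ s, F.proj h (f i) := by
  classical
  induction s using Finset.induction with
  | empty => simp [proj_zero]
  | insert _ _ hx ih =>
      rw [Finset.sum_insert hx, Finset.sum_insert hx, proj_add, ih]

theorem mem_fullValueGroup {h : H} :
    h ∈ F.fullValueGroup ↔ ∃ x ∈ F.comp h, x ≠ 0 :=
  ⟨fun ⟨x, hx, h0, _⟩ => ⟨x, hx, h0⟩, fun ⟨x, hx, h0⟩ => ⟨x, hx, h0, trivial⟩⟩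

end GradedField

end Aux


universe u v

/-- Let `L` be a graded subfield of an `H`-graded field `K` with `K₁ = L₁` (i.e.
`f_{K/L} = 1`).  Then `L = ⊕_{r ∈ ρ(L^×)} K_r`, and `L ↦ ρ(L^×)` is an
inclusion-preserving bijection between graded subfields with `f = 1` and subgroups of
`ρ(K^×)`; moreover `[K:L]` equals the index of `ρ(L^×)` in `ρ(K^×)` (as cardinals, so
`K/L` is finite iff the index is finite). -/
theorem GradedField.residually_trivial_subfields {H : Type u} [CommGroup H] [DecidableEq H]
    {K : Type v} [CommRing K] (F : GradedField H K) (L : Subring K)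
    (hL : F.IsGradedSubfield L) (hf : F.oneComponent ≤ L) :
    -- `L = ⊕_{r ∈ ρ(L^×)} K_r`
    (∀ x : K, x ∈ L ↔
      x ∈ AddSubgroup.closure {y : K | ∃ r ∈ F.valueGroup L hL.inv_mem, y ∈ F.comp r}) ∧
    -- injectivity of `L ↦ ρ(L^×)`
    (∀ L' : Subring K, ∀ hL' : F.IsGradedSubfield L', F.oneComponent ≤ L' →
      F.valueGroup L' hL'.inv_mem = F.valueGroup L hL.inv_mem → L' = L) ∧
    -- surjectivity of `L ↦ ρ(L^×)` onto subgroups of `ρ(K^×)`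
    (∀ V : Subgroup H, V ≤ F.fullValueGroup →
      ∃ (L' : Subring K) (hL' : F.IsGradedSubfield L'),
        F.oneComponent ≤ L' ∧ F.valueGroup L' hL'.inv_mem = V) ∧
    -- inclusion-preserving in both directions
    (∀ L' : Subring K, ∀ hL' : F.IsGradedSubfield L', F.oneComponent ≤ L' →
      (L ≤ L' ↔ F.valueGroup L hL.inv_mem ≤ F.valueGroup L' hL'.inv_mem)) ∧
    -- `[K:L]` equals the index of the value groups
    Cardinal.lift.{u} (Module.rank ↥L K) =
      Cardinal.lift.{v}
        (Cardinal.mk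
          (↥F.fullValueGroup ⧸ (F.valueGroup L hL.inv_mem).subgroupOf F.fullValueGroup)) := by
  classical
  haveI : Nontrivial K := nontrivial_of_ne 0 1 F.zero_ne_one
  refine ⟨fun x => F.mem_iff_mem_closure hL hf x, ?_, ?_, ?_, ?_⟩
  · -- injectivity
    intro L' hL' hf' hVeq
    ext x
    rw [F.mem_iff_mem_closure hL' hf', F.mem_iff_mem_closure hL hf]
    show x ∈ AddSubgroup.closure (F.compSet _) ↔ x ∈ AddSubgroup.closure (F.compSet _)
    rw [hVeq]
  · -- surjectivity
    intro V hVle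
    set A := AddSubgroup.closure (F.compSet V) with hA
    have hone : (1 : K) ∈ A := AddSubgroup.subset_closure ⟨1, V.one_mem, F.one_mem⟩
    have hmul : ∀ x y : K, x ∈ A → y ∈ A → x * y ∈ A := by
      intro x y hx hy
      induction hy using AddSubgroup.closure_induction with
      | mem b hb =>
          obtain ⟨s, hsV, hbs⟩ := hb
          induction hx using AddSubgroup.closure_induction with
          | mem a ha =>
              obtain ⟨r, hrV, har⟩ := ha
              exact AddSubgroup.subset_closure ⟨r * s, V.mul_mem hrV hsV, F.mul_mem har hbs⟩
          | zero => rw [zero_mul]; exact A.zero_mem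
          | add u w _ _ hu hw => rw [add_mul]; exact A.add_mem hu hw
          | neg u _ hu => rw [neg_mul]; exact A.neg_mem hu
      | zero => rw [mul_zero]; exact A.zero_mem
      | add u w _ _ hu hw => rw [mul_add]; exact A.add_mem hu hw
      | neg u _ hu => rw [mul_neg]; exact A.neg_mem hu
    let L' : Subring K :=
      { carrier := A
        one_mem' := hone
        mul_mem' := fun ha hb => hmul _ _ ha hb
        add_mem' := fun ha hb => A.add_mem ha hb
        zero_mem' := A.zero_mem
        neg_mem' := fun ha => A.neg_mem ha }
    have hmemL' : ∀ x : K, x ∈ L' ↔ x ∈ A := fun x => Iff.rfl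
    have hdeg : ∀ (h : H) (x : K), x ∈ A → x ∈ F.comp h → x ≠ 0 → h ∈ V := by
      intro h x hxA hxh hx0
      by_contra hhV
      exact hx0 (by rw [← F.proj_of_mem_same hxh]; exact F.proj_eq_zero_of_mem_closure hxA hhV)
    have hf' : F.oneComponent ≤ L' := fun x hx =>
      AddSubgroup.subset_closure ⟨1, V.one_mem, hx⟩
    have hgraded : F.IsGradedSubring L' := by
      intro x hx
      refine AddSubgroup.closure_mono ?_ hx
      rintro y ⟨r, hrV, hyr⟩
      exact ⟨AddSubgroup.subset_closure ⟨r, hrV, hyr⟩, r, hyr⟩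
    have hinv : ∀ x ∈ L', F.Homogeneous x → x ≠ 0 → Ring.inverse x ∈ L' := by
      rintro x hxL' ⟨h, hxh⟩ hx0
      obtain ⟨y, hy, hxy⟩ := F.inv_mem hxh hx0
      rw [GradedField.ringInverse_eq_s16 hxy]
      exact AddSubgroup.subset_closure ⟨h⁻¹, V.inv_mem (hdeg h x hxL' hxh hx0), hy⟩
    refine ⟨L', ⟨hgraded, hinv⟩, hf', ?_⟩
    apply le_antisymm
    · rintro h ⟨x, hxh, hx0, hxL'⟩
      exact hdeg h x hxL' hxh hx0
    · intro h hh
      obtain ⟨x, hx, hx0⟩ := F.mem_fullValueGroup.mp (hVle hh)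
      exact ⟨x, hx, hx0, AddSubgroup.subset_closure ⟨h, hh, hx⟩⟩
  · -- inclusion preserving
    intro L' hL' hf'
    constructor
    · rintro hle h ⟨x, hx, hx0, hxL⟩
      exact ⟨x, hx, hx0, hle hxL⟩
    · intro hVle x hx
      refine (F.mem_iff_mem_closure hL' hf' x).mpr ?_
      refine AddSubgroup.closure_mono ?_ ((F.mem_iff_mem_closure hL hf x).mp hx)
      rintro y ⟨r, hrV, hyr⟩
      exact ⟨r, hVle hrV, hyr⟩
  · -- rank equals index
    set G := F.fullValueGroup with hG
    set V := F.valueGroup L hL.inv_mem with hV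
    set N := V.subgroupOf G with hN
    have hex : ∀ c : ↥G ⧸ N, ∃ x : K,
        x ∈ F.comp ((Quotient.out c : ↥G) : H) ∧ x ≠ 0 := fun c =>
      F.mem_fullValueGroup.mp (Quotient.out c : ↥G).2
    choose b hb hb0 using hex
    have hmemclos : ∀ y : K, y ∈ L → y ∈ AddSubgroup.closure (F.compSet V) :=
      fun y hy => (F.mem_iff_mem_closure hL hf y).mp hy
    -- linear independence
    have hli : LinearIndependent ↥L b := by
      rw [linearIndependent_iff']
      intro s g hsum i hi
      by_contra hgi
      have hgi' : (g i : K) ≠ 0 := fun h => hgi (Subtype.ext h)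
      obtain ⟨v, hv⟩ : ∃ v, F.proj v (g i : K) ≠ 0 := by
        by_contra hc; push_neg at hc; exact hgi' (F.eq_zero_of_proj_eq_zero hc)
      have hvV : v ∈ V := by
        by_contra hvV
        exact hv (F.proj_eq_zero_of_mem_closure (hmemclos _ (g i).2) hvV)
      have hterm : ∀ c : ↥G ⧸ N,
          F.proj (v * ((Quotient.out i : ↥G) : H)) ((g c : K) * b c) =
            F.proj (v * ((Quotient.out i : ↥G) : H) * ((Quotient.out c : ↥G) : H)⁻¹)
              (g c : K) * b c := by
        intro c
        have hkey : v * ((Quotient.out i : ↥G) : H) * ((Quotient.out c : ↥G) : H)⁻¹ *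
            ((Quotient.out c : ↥G) : H) = v * ((Quotient.out i : ↥G) : H) := by group
        have := F.proj_mul_of_mem (hb c)
          (v * ((Quotient.out i : ↥G) : H) * ((Quotient.out c : ↥G) : H)⁻¹) (g c : K)
        rwa [hkey] at this
      have hzero : ∀ c ∈ s, c ≠ i →
          F.proj (v * ((Quotient.out i : ↥G) : H)) ((g c : K) * b c) = 0 := by
        intro c _ hci
        rw [hterm c]
        have hnot : v * ((Quotient.out i : ↥G) : H) * ((Quotient.out c : ↥G) : H)⁻¹ ∉ V := by
          intro hw
          have h1 : ((Quotient.out i : ↥G) : H) * ((Quotient.out c : ↥G) : H)⁻¹ ∈ V := by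
            have := V.mul_mem (V.inv_mem hvV) hw
            rwa [show v⁻¹ * (v * ((Quotient.out i : ↥G) : H) * ((Quotient.out c : ↥G) : H)⁻¹)
              = ((Quotient.out i : ↥G) : H) * ((Quotient.out c : ↥G) : H)⁻¹ by group] at this
          have h2 : (Quotient.out c : ↥G)⁻¹ * (Quotient.out i : ↥G) ∈ N := by
            refine Subgroup.mem_subgroupOf.mpr ?_
            have h1' : ((Quotient.out c : ↥G) : H)⁻¹ * ((Quotient.out i : ↥G) : H) ∈ V := by
              rwa [mul_comm] at h1
            simpa using h1'
          have h3 : (↑(Quotient.out c : ↥G) : ↥G ⧸ N) = ↑(Quotient.out i : ↥G) :=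
            (QuotientGroup.eq).mpr h2
          rw [QuotientGroup.out_eq', QuotientGroup.out_eq'] at h3
          exact hci h3
        rw [F.proj_eq_zero_of_mem_closure (hmemclos _ (g c).2) hnot, zero_mul]
      have hsum' := congrArg (F.proj (v * ((Quotient.out i : ↥G) : H))) hsum
      rw [F.proj_zero] at hsum'
      have hsmul : ∀ c : ↥G ⧸ N, g c • b c = (g c : K) * b c := fun c => rfl
      rw [show (∑ c ∈ s, g c • b c) = ∑ c ∈ s, (g c : K) * b c from
        Finset.sum_congr rfl fun c _ => hsmul c, F.proj_sum] at hsum'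
      rw [Finset.sum_eq_single i (fun c hc hci => hzero c hc hci)
        (fun his => absurd hi his)] at hsum'
      rw [hterm i, show v * ((Quotient.out i : ↥G) : H) * ((Quotient.out i : ↥G) : H)⁻¹
          = v by group] at hsum'
      exact F.mul_ne_zero_homog (F.proj_mem v (g i : K)) (hb i) hv (hb0 i) hsum'
    -- spanning
    have hsp : ∀ x : K, x ∈ Submodule.span ↥L (Set.range b) := by
      intro x
      induction x using F.homogeneous_induction with
      | h0 => exact zero_mem _
      | hadd x y hx hy => exact add_mem hx hy
      | hhom h x hx =>
          by_cases hx0 : x = 0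
          · rw [hx0]; exact zero_mem _
          have hhG : h ∈ G := F.mem_fullValueGroup.mpr ⟨x, hx, hx0⟩
          set c : ↥G ⧸ N := ↑(⟨h, hhG⟩ : ↥G) with hc
          have hrel : (⟨h, hhG⟩ : ↥G)⁻¹ * Quotient.out c ∈ N :=
            (QuotientGroup.eq).mp (by rw [QuotientGroup.out_eq'])
          have hrelH : h⁻¹ * ((Quotient.out c : ↥G) : H) ∈ V := by
            have := Subgroup.mem_subgroupOf.mp hrel
            push_cast at this
            exact this
          have hmemV : h * ((Quotient.out c : ↥G) : H)⁻¹ ∈ V := by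
            have := V.inv_mem hrelH
            rwa [mul_inv, inv_inv] at this
          obtain ⟨z, hz, hbz⟩ := F.inv_mem (hb c) (hb0 c)
          have hℓ : x * z ∈ F.comp (h * ((Quotient.out c : ↥G) : H)⁻¹) := F.mul_mem hx hz
          have hℓL : x * z ∈ L :=
            F.comp_subset_of_mem_valueGroup hL.inv_mem hf hmemV hℓ
          have hxeq : x = (x * z) * b c := by
            rw [mul_assoc, mul_comm z (b c), hbz, mul_one]
          rw [hxeq]
          exact Submodule.smul_mem _ (⟨x * z, hℓL⟩ : ↥L)
            (Submodule.subset_span (Set.mem_range_self c))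
    have hbasis : Module.Basis (↥G ⧸ N) ↥L K := Module.Basis.mk hli (fun x _ => hsp x)
    exact hbasis.mk_eq_rank.symm
end ZR
end
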